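/- arXiv:1403.5209 — 3 statements merged into one kernel-verified Lean document; each statement's English description precedes it below -/
import Mathlib

section
/- If f ≃ f₁ + f₂ + ⋯ for simple functions fₙ, then the series ∑ₙ ∫ fₙ converges in E and ‖∑ₙ ∫ fₙ‖ ≤ ∫ ‖f(x)‖ dμ(x). -/
open Filter Topology

section Defs

variable {X : Type*}

def IsSetRing (R : Set (Set X)) : Prop :=
  ∀ A ∈ R, ∀ B ∈ R, A ∪ B ∈ R ∧ A \ B ∈ R

def IsPremeasure (R : Set (Set X)) (μ : Set X → ℝ) : Prop :=
  (∀ A ∈ R, 0 ≤ μ A) ∧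
  ∀ A : ℕ → Set X, (∀ n, A n ∈ R) → Pairwise (Function.onFun Disjoint A) →
    (⋃ n, A n) ∈ R → HasSum (fun n => μ (A n)) (μ (⋃ n, A n))

variable {E : Type*} [AddCommGroup E] [Module ℝ E]

/-- `f` is a simple function (finite combination of indicators of sets in `R`)
with integral `v = ∑ μ(Aᵢ) • vᵢ`. -/
def IsSimpleWithIntegral (R : Set (Set X)) (μ : Set X → ℝ) (f : X → E) (v : E) : Prop :=
  ∃ (n : ℕ) (c : Fin n → E) (A : Fin n → Set X),
    (∀ i, A i ∈ R) ∧
    (∀ x, f x = ∑ i, Set.indicator (A i) (fun _ => c i) x) ∧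
    v = ∑ i, μ (A i) • c i

def IsSimpleFunc (R : Set (Set X)) (μ : Set X → ℝ) (f : X → E) : Prop :=
  ∃ v, IsSimpleWithIntegral R μ f v

end Defs

section Banach

variable {X : Type*} {E : Type*} [NormedAddCommGroup E] [NormedSpace ℝ E]

/-- `f ≃ g₁ + g₂ + ⋯` : expansion of `f` in a series of simple functions. -/
def SeriesExpansion (R : Set (Set X)) (μ : Set X → ℝ) (f : X → E) (g : ℕ → X → E) : Prop :=
  (∀ n, IsSimpleFunc R μ (g n)) ∧
  (∃ c : ℕ → ℝ, (∀ n, IsSimpleWithIntegral R μ (fun x => ‖g n x‖) (c n)) ∧ Summable c) ∧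
  ∀ x, Summable (fun n => ‖g n x‖) → HasSum (fun n => g n x) (f x)

def BochnerIntegrable (R : Set (Set X)) (μ : Set X → ℝ) (f : X → E) : Prop :=
  ∃ g, SeriesExpansion R μ f g

def HasBochnerIntegral (R : Set (Set X)) (μ : Set X → ℝ) (f : X → E) (I : E) : Prop :=
  ∃ g, SeriesExpansion R μ f g ∧
    ∃ J : ℕ → E, (∀ n, IsSimpleWithIntegral R μ (g n) (J n)) ∧ HasSum J I

def IsNullSet (R : Set (Set X)) (μ : Set X → ℝ) (Z : Set X) : Prop :=
  HasBochnerIntegral R μ (Set.indicator Z fun _ => (1 : ℝ)) 0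

end Banach

open Filter Topology Set

namespace Stmt3Aux

variable {X : Type*} {R : Set (Set X)} {μ : Set X → ℝ}

lemma union_mem (hR : IsSetRing R) {A B : Set X} (hA : A ∈ R) (hB : B ∈ R) : A ∪ B ∈ R :=
  (hR A hA B hB).1

lemma diff_mem (hR : IsSetRing R) {A B : Set X} (hA : A ∈ R) (hB : B ∈ R) : A \ B ∈ R :=
  (hR A hA B hB).2

lemma inter_mem (hR : IsSetRing R) {A B : Set X} (hA : A ∈ R) (hB : B ∈ R) : A ∩ B ∈ R := by
  have h : A ∩ B = A \ (A \ B) := by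
    ext x; simp only [Set.mem_inter_iff, Set.mem_diff]; tauto
  rw [h]; exact diff_mem hR hA (diff_mem hR hA hB)

lemma measure_empty (hμ : IsPremeasure R μ) (h0 : (∅ : Set X) ∈ R) : μ ∅ = 0 := by
  have h := hμ.2 (fun _ => ∅) (fun _ => h0)
    (by intro i j _; simp [Function.onFun]) (by simpa using h0)
  have h2 := h.summable.tendsto_atTop_zero
  exact tendsto_nhds_unique tendsto_const_nhds h2

lemma measure_union₂ (hR : IsSetRing R) (hμ : IsPremeasure R μ) {A B : Set X}
    (hA : A ∈ R) (hB : B ∈ R) (hd : Disjoint A B) : μ (A ∪ B) = μ A + μ B := by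
  classical
  have h0 : (∅ : Set X) ∈ R := by simpa using diff_mem hR hA hA
  set f : ℕ → Set X := fun n => if n = 0 then A else if n = 1 then B else ∅ with hf
  have hmem : ∀ n, f n ∈ R := by
    intro n; simp only [hf]; split_ifs <;> assumption
  have hdisj : Pairwise (Function.onFun Disjoint f) := by
    intro i j hij
    simp only [Function.onFun, hf]
    split_ifs with h1 h2 h3 h4 h5 h6 h7 h8 <;>
      first
        | exact hd | exact hd.symm
        | exact disjoint_bot_left | exact disjoint_bot_right
        | (exfalso; omega)
  have hU : (⋃ n, f n) = A ∪ B := by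
    apply Set.eq_of_subset_of_subset
    · refine Set.iUnion_subset fun n => ?_
      simp only [hf]; split_ifs <;> simp
    · intro x hx
      rcases hx with hx | hx
      · exact Set.mem_iUnion.2 ⟨0, by simp [hf, hx]⟩
      · exact Set.mem_iUnion.2 ⟨1, by simp [hf, hx]⟩
  have h := hμ.2 f hmem hdisj (by rw [hU]; exact union_mem hR hA hB)
  rw [hU] at h
  have h2 : HasSum (fun n => μ (f n)) (∑ n ∈ ({0, 1} : Finset ℕ), μ (f n)) := by
    apply hasSum_sum_of_ne_finset_zero
    intro n hn
    simp only [Finset.mem_insert, Finset.mem_singleton] at hn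
    push_neg at hn
    have : f n = ∅ := by simp [hf, hn.1, hn.2]
    rw [this, measure_empty hμ h0]
  have := h.unique h2
  rw [this]
  norm_num [hf]

lemma measure_nonneg (hμ : IsPremeasure R μ) {A : Set X} (hA : A ∈ R) : 0 ≤ μ A := hμ.1 A hA

lemma measure_mono (hR : IsSetRing R) (hμ : IsPremeasure R μ) {A B : Set X}
    (hA : A ∈ R) (hB : B ∈ R) (hAB : A ⊆ B) : μ A ≤ μ B := by
  have h : B = A ∪ (B \ A) := by rw [Set.union_diff_cancel hAB]
  rw [h, measure_union₂ hR hμ hA (diff_mem hR hB hA) disjoint_sdiff_right]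
  linarith [measure_nonneg hμ (diff_mem hR hB hA)]

lemma biUnion_mem (hR : IsSetRing R) (h0 : (∅ : Set X) ∈ R) {ι : Type*} {s : Finset ι}
    {B : ι → Set X} (hB : ∀ i ∈ s, B i ∈ R) : (⋃ i ∈ s, B i) ∈ R := by
  classical
  induction s using Finset.induction with
  | empty => simpa using h0
  | insert _ _ hx ih =>
    rw [Finset.set_biUnion_insert]
    exact union_mem hR (hB _ (Finset.mem_insert_self _ _))
      (ih fun i hi => hB i (Finset.mem_insert_of_mem hi))

lemma measure_biUnion (hR : IsSetRing R) (hμ : IsPremeasure R μ) (h0 : (∅ : Set X) ∈ R)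
    {ι : Type*} {s : Finset ι} {B : ι → Set X} (hB : ∀ i ∈ s, B i ∈ R)
    (hdisj : Set.Pairwise s (Function.onFun Disjoint B)) :
    μ (⋃ i ∈ s, B i) = ∑ i ∈ s, μ (B i) := by
  classical
  induction s using Finset.induction with
  | empty => simpa using measure_empty hμ h0
  | @insert a t ha ih =>
    rw [Finset.set_biUnion_insert, Finset.sum_insert ha]
    have hBt : (⋃ i ∈ t, B i) ∈ R := biUnion_mem hR h0 (fun i hi => hB i (Finset.mem_insert_of_mem hi))
    have hd : Disjoint (B a) (⋃ i ∈ t, B i) := by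
      rw [Set.disjoint_iUnion_right]
      intro i
      rw [Set.disjoint_iUnion_right]
      intro hi
      exact hdisj (Finset.mem_insert_self _ _) (Finset.mem_insert_of_mem hi)
        (fun h => ha (h ▸ hi))
    rw [measure_union₂ hR hμ (hB _ (Finset.mem_insert_self _ _)) hBt hd,
      ih (fun i hi => hB i (Finset.mem_insert_of_mem hi))
        (hdisj.mono (Finset.coe_subset.2 (Finset.subset_insert _ _)))]

lemma tendsto_measure (hR : IsSetRing R) (hμ : IsPremeasure R μ) {B : ℕ → Set X}
    (hB : ∀ n, B n ∈ R) (hmono : Monotone B) (hU : (⋃ n, B n) ∈ R) :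
    Tendsto (fun n => μ (B n)) atTop (𝓝 (μ (⋃ n, B n))) := by
  set D : ℕ → Set X := fun n => Nat.rec (B 0) (fun k _ => B (k+1) \ B k) n with hD
  have hD0 : D 0 = B 0 := rfl
  have hDs : ∀ n, D (n+1) = B (n+1) \ B n := fun n => rfl
  have hDR : ∀ n, D n ∈ R := by
    intro n; cases n with
    | zero => exact hB 0
    | succ k => rw [hDs]; exact diff_mem hR (hB _) (hB _)
  have hDsub : ∀ n, D n ⊆ B n := by
    intro n; cases n with
    | zero => exact subset_rfl
    | succ k => rw [hDs]; exact Set.diff_subset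
  have hDdisj : Pairwise (Function.onFun Disjoint D) := by
    have key : ∀ i j, i < j → Disjoint (D i) (D j) := by
      intro i j hij
      cases j with
      | zero => omega
      | succ k =>
        rw [hDs]
        have : D i ⊆ B k := (hDsub i).trans (hmono (by omega))
        exact Set.disjoint_of_subset_left this disjoint_sdiff_right
    intro i j hij
    rcases lt_or_gt_of_ne hij with h | h
    · exact key i j h
    · exact (key j i h).symm
  have hpart : ∀ n, B n = ⋃ k ∈ Finset.range (n+1), D k := by
    intro n
    induction n with
    | zero => simp [hD0]
    | succ m ih =>
      ext x
      constructor
      · intro hx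
        by_cases hxm : x ∈ B m
        · rw [ih] at hxm
          simp only [Set.mem_iUnion, Finset.mem_range] at hxm ⊢
          obtain ⟨k, hk, hxk⟩ := hxm
          exact ⟨k, by omega, hxk⟩
        · simp only [Set.mem_iUnion, Finset.mem_range]
          exact ⟨m+1, by omega, by rw [hDs]; exact ⟨hx, hxm⟩⟩
      · intro hx
        simp only [Set.mem_iUnion, Finset.mem_range] at hx
        obtain ⟨k, hk, hxk⟩ := hx
        have : D k ⊆ B (m+1) := (hDsub k).trans (hmono (by omega))
        exact this hxk
  have hUD : (⋃ n, D n) = ⋃ n, B n := by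
    apply Set.eq_of_subset_of_subset
    · exact Set.iUnion_mono hDsub
    · refine Set.iUnion_subset fun n => ?_
      rw [hpart n]
      refine Set.iUnion₂_subset fun k _ => Set.subset_iUnion D k
  have hsum := hμ.2 D hDR hDdisj (by rw [hUD]; exact hU)
  rw [hUD] at hsum
  have h0 : (∅ : Set X) ∈ R := by simpa using diff_mem hR (hB 0) (hB 0)
  have hBn : ∀ n, μ (B n) = ∑ k ∈ Finset.range (n+1), μ (D k) := by
    intro n
    rw [hpart n]
    exact measure_biUnion hR hμ h0 (fun i _ => hDR i) (hDdisj.set_pairwise _)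
  have htend := hsum.tendsto_sum_nat
  have h2 : Tendsto (fun n => ∑ k ∈ Finset.range (n+1), μ (D k)) atTop (𝓝 (μ (⋃ n, B n))) :=
    htend.comp (tendsto_add_atTop_nat 1)
  exact h2.congr fun n => (hBn n).symm

end Stmt3Aux
namespace Stmt3Aux

section Master
variable {X : Type*} {R : Set (Set X)} {μ : Set X → ℝ}
variable {E : Type*} [NormedAddCommGroup E] [NormedSpace ℝ E]

lemma biInter_mem (hR : IsSetRing R) {ι : Type*} {s : Finset ι} (hs : s.Nonempty)
    {B : ι → Set X} (hB : ∀ i ∈ s, B i ∈ R) : (⋂ i ∈ s, B i) ∈ R := by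
  classical
  induction hs using Finset.Nonempty.cons_induction with
  | singleton a => simpa using hB a (by simp)
  | cons a t ha ht ih =>
    rw [Finset.cons_eq_insert, Finset.set_biInter_insert]
    exact inter_mem hR (hB a (by simp)) (ih fun i hi => hB i (by simp [hi]))

lemma diff_biUnion_mem (hR : IsSetRing R) {ι : Type*} {t : Finset ι} {B : Set X}
    (hB : B ∈ R) {C : ι → Set X} (hC : ∀ i ∈ t, C i ∈ R) : B \ (⋃ i ∈ t, C i) ∈ R := by
  classical
  induction t using Finset.induction with
  | empty => simpa using hB
  | @insert a s ha ih =>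
    rw [Finset.set_biUnion_insert, ← Set.union_comm, ← Set.diff_diff]
    exact diff_mem hR (ih fun i hi => hC i (by simp [hi])) (hC a (by simp))

theorem master (hR : IsSetRing R) (hμ : IsPremeasure R μ)
    {n : ℕ} (A : Fin n → Set X) (hA : ∀ i, A i ∈ R) (c : Fin n → E) :
    ∃ (k : ℕ) (C : Fin k → Set X) (e : Fin k → E),
      (∀ j, C j ∈ R) ∧ Pairwise (Function.onFun Disjoint C) ∧ (∀ j, (C j).Nonempty) ∧
      (∀ x, ∑ i, (A i).indicator (fun _ => c i) x = ∑ j, (C j).indicator (fun _ => e j) x) ∧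
      ∑ i, μ (A i) • c i = ∑ j, μ (C j) • e j := by
  classical
  set ix : X → Finset (Fin n) := fun x => Finset.univ.filter (fun i => x ∈ A i) with hix
  have mem_ix : ∀ x i, i ∈ ix x ↔ x ∈ A i := by intro x i; simp [hix]
  set atom : Finset (Fin n) → Set X := fun S => {x | ix x = S} with hatom
  have mem_atom : ∀ x S, x ∈ atom S ↔ ∀ i, (x ∈ A i ↔ i ∈ S) := by
    intro x S
    simp only [hatom, Set.mem_setOf_eq, Finset.ext_iff, mem_ix]
  have atomR : ∀ S : Finset (Fin n), S.Nonempty → atom S ∈ R := by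
    intro S hS
    have : atom S = (⋂ i ∈ S, A i) \ ⋃ i ∈ (Finset.univ \ S), A i := by
      ext x
      simp only [mem_atom, Set.mem_diff, Set.mem_iUnion, Set.mem_iInter, Finset.mem_sdiff,
        Finset.mem_univ, true_and, not_exists]
      constructor
      · intro h
        exact ⟨fun i hi => (h i).2 hi, fun i hi hx => hi ((h i).1 hx)⟩
      · intro ⟨h1, h2⟩ i
        constructor
        · intro hx; by_contra hi; exact h2 i hi hx
        · exact h1 i
    rw [this]
    exact diff_biUnion_mem hR (biInter_mem hR hS fun i _ => hA i) fun i _ => hA i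
  have atom_disj : ∀ S S' : Finset (Fin n), S ≠ S' → Disjoint (atom S) (atom S') := by
    intro S S' hSS
    rw [Set.disjoint_left]
    intro x hx hx'
    exact hSS ((show ix x = S from hx).symm.trans (show ix x = S' from hx'))
  have self_mem_atom : ∀ x, x ∈ atom (ix x) := fun x => rfl
  set 𝒮 : Finset (Finset (Fin n)) :=
    Finset.univ.filter (fun S => S.Nonempty ∧ (atom S).Nonempty) with h𝒮
  have mem_𝒮 : ∀ S, S ∈ 𝒮 ↔ S.Nonempty ∧ (atom S).Nonempty := by
    intro S; simp [h𝒮]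
  have hAdecomp : ∀ i, A i = ⋃ S ∈ 𝒮.filter (fun S => i ∈ S), atom S := by
    intro i
    ext x
    simp only [Set.mem_iUnion, Finset.mem_filter, exists_prop]
    constructor
    · intro hx
      refine ⟨ix x, ⟨(mem_𝒮 _).2 ⟨⟨i, (mem_ix x i).2 hx⟩, ⟨x, self_mem_atom x⟩⟩,
        (mem_ix x i).2 hx⟩, self_mem_atom x⟩
    · rintro ⟨S, ⟨-, hiS⟩, hxS⟩
      exact ((mem_atom x S).1 hxS i).2 hiS
  have hμdecomp : ∀ i, μ (A i) = ∑ S ∈ 𝒮.filter (fun S => i ∈ S), μ (atom S) := by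
    intro i
    have h0 : (∅ : Set X) ∈ R := by simpa using diff_mem hR (hA i) (hA i)
    rw [hAdecomp i]
    refine measure_biUnion hR hμ h0 (fun S hS => atomR S ?_) ?_
    · exact ((mem_𝒮 S).1 (Finset.mem_filter.1 hS).1).1
    · intro S hS S' hS' hne
      exact atom_disj S S' hne
  have hpt : ∀ x, ∑ i, (A i).indicator (fun _ => c i) x
      = ∑ S ∈ 𝒮, (atom S).indicator (fun _ => ∑ i ∈ S, c i) x := by
    intro x
    have hL : ∑ i, (A i).indicator (fun _ => c i) x = ∑ i ∈ ix x, c i := by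
      rw [hix, Finset.sum_filter]
      exact Finset.sum_congr rfl fun i _ => by simp [Set.indicator_apply]
    rw [hL]
    by_cases hmem : ix x ∈ 𝒮
    · rw [Finset.sum_eq_single_of_mem (ix x) hmem]
      · simp [Set.indicator_of_mem (self_mem_atom x)]
      · intro S hS hne
        exact Set.indicator_of_notMem
          (fun hx => hne (show ix x = S from hx).symm) (fun _ => ∑ i ∈ S, c i)
    · have hempty : ix x = ∅ := by
        by_contra hne
        exact hmem ((mem_𝒮 _).2 ⟨Finset.nonempty_iff_ne_empty.2 hne, ⟨x, self_mem_atom x⟩⟩)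
      rw [hempty, Finset.sum_empty]
      refine (Finset.sum_eq_zero fun S hS => ?_).symm
      refine Set.indicator_of_notMem (fun hx => ?_) (fun _ => ∑ i ∈ S, c i)
      have : ix x = S := hx
      rw [hempty] at this
      exact (((mem_𝒮 S).1 hS).1.ne_empty) this.symm
  have hint : ∑ i, μ (A i) • c i = ∑ S ∈ 𝒮, μ (atom S) • ∑ i ∈ S, c i := by
    have : ∀ i, μ (A i) • c i = ∑ S ∈ 𝒮.filter (fun S => i ∈ S), μ (atom S) • c i := by
      intro i; rw [hμdecomp i, Finset.sum_smul]
    rw [Finset.sum_congr rfl fun i _ => this i]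
    rw [Finset.sum_comm' (s := Finset.univ) (t := fun i => 𝒮.filter (fun S => i ∈ S))
      (t' := 𝒮) (s' := fun S => Finset.univ.filter (fun i => i ∈ S))
      (by intro i S; simp [Finset.mem_filter]; tauto)]
    refine Finset.sum_congr rfl fun S hS => ?_
    rw [Finset.smul_sum]
    refine Finset.sum_congr (by simp) fun i _ => rfl
  refine ⟨𝒮.card, fun j => atom (𝒮.equivFin.symm j : Finset (Fin n)),
    fun j => ∑ i ∈ (𝒮.equivFin.symm j : Finset (Fin n)), c i, ?_, ?_, ?_, ?_, ?_⟩
  · intro j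
    exact atomR _ ((mem_𝒮 _).1 (𝒮.equivFin.symm j).2).1
  · intro j j' hjj
    refine atom_disj _ _ fun h => hjj ?_
    have : (𝒮.equivFin.symm j) = (𝒮.equivFin.symm j') := Subtype.ext h
    simpa using congrArg 𝒮.equivFin this
  · intro j
    exact ((mem_𝒮 _).1 (𝒮.equivFin.symm j).2).2
  · intro x
    rw [hpt x, ← Finset.sum_coe_sort 𝒮, ← Equiv.sum_comp 𝒮.equivFin.symm]
  · rw [hint, ← Finset.sum_coe_sort 𝒮, ← Equiv.sum_comp 𝒮.equivFin.symm]

end Master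
end Stmt3Aux
namespace Stmt3Aux
section Calc
variable {X : Type*} {R : Set (Set X)} {μ : Set X → ℝ}
variable {E : Type*} [NormedAddCommGroup E] [NormedSpace ℝ E]
variable {F : Type*} [NormedAddCommGroup F] [NormedSpace ℝ F]

local notation "ISI" => IsSimpleWithIntegral R μ

lemma isi_congr {f f' : X → E} {v : E} (h : ∀ x, f x = f' x) (hf : ISI f v) : ISI f' v := by
  obtain ⟨n, c, A, hA, hfx, hv⟩ := hf
  exact ⟨n, c, A, hA, fun x => (h x).symm.trans (hfx x), hv⟩

lemma isi_zero : ISI (fun _ : X => (0 : E)) 0 :=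
  ⟨0, Fin.elim0, Fin.elim0, fun i => i.elim0, by simp, by simp⟩

lemma isi_add {f g : X → E} {v w : E} (hf : ISI f v) (hg : ISI g w) :
    ISI (fun x => f x + g x) (v + w) := by
  obtain ⟨n, c, A, hA, hfx, hv⟩ := hf
  obtain ⟨m, d, B, hB, hgx, hw⟩ := hg
  refine ⟨n + m, Fin.append c d, Fin.append A B, ?_, ?_, ?_⟩
  · intro i
    refine Fin.addCases (fun i => ?_) (fun i => ?_) i
    · simpa [Fin.append_left] using hA i
    · simpa [Fin.append_right] using hB i
  · intro x
    rw [Fin.sum_univ_add]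
    simp only [Fin.append_left, Fin.append_right]
    rw [← hfx x, ← hgx x]
  · rw [Fin.sum_univ_add]
    simp only [Fin.append_left, Fin.append_right]
    rw [← hv, ← hw]

lemma isi_smul {f : X → E} {v : E} (a : ℝ) (hf : ISI f v) :
    ISI (fun x => a • f x) (a • v) := by
  obtain ⟨n, c, A, hA, hfx, hv⟩ := hf
  refine ⟨n, fun i => a • c i, A, hA, ?_, ?_⟩
  · intro x
    show a • f x = _
    rw [hfx x, Finset.smul_sum]
    refine Finset.sum_congr rfl fun i _ => ?_
    by_cases hx : x ∈ A i <;> simp [Set.indicator_apply, hx]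
  · rw [hv, Finset.smul_sum]
    refine Finset.sum_congr rfl fun i _ => ?_
    rw [smul_comm]

lemma isi_neg {f : X → E} {v : E} (hf : ISI f v) : ISI (fun x => -(f x)) (-v) := by
  have := isi_smul (-1 : ℝ) hf
  simpa using this

lemma sum_indicator_of_disjoint {k : ℕ} {C : Fin k → Set X}
    (hdisj : Pairwise (Function.onFun Disjoint C))
    {u : Fin k → E} {φ : X → E} (hval : ∀ j, ∀ x ∈ C j, φ x = u j)
    (hout : ∀ x, (∀ j, x ∉ C j) → φ x = 0) :
    ∀ x, φ x = ∑ j, (C j).indicator (fun _ => u j) x := by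
  intro x
  by_cases hx : ∃ j, x ∈ C j
  · obtain ⟨j, hj⟩ := hx
    rw [Finset.sum_eq_single_of_mem j (Finset.mem_univ j)]
    · rw [Set.indicator_of_mem hj]; exact hval j x hj
    · intro j' _ hne
      exact Set.indicator_of_notMem
        (fun hx' => Set.disjoint_left.1 (hdisj hne) hx' hj) (fun _ => u j')
  · push_neg at hx
    rw [hout x hx]
    exact (Finset.sum_eq_zero fun j _ =>
      Set.indicator_of_notMem (hx j) (fun _ => u j)).symm

lemma isi_of_partition {k : ℕ} {C : Fin k → Set X} (hC : ∀ j, C j ∈ R)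
    (hdisj : Pairwise (Function.onFun Disjoint C))
    {u : Fin k → E} {φ : X → E} (hval : ∀ j, ∀ x ∈ C j, φ x = u j)
    (hout : ∀ x, (∀ j, x ∉ C j) → φ x = 0) :
    ISI φ (∑ j, μ (C j) • u j) :=
  ⟨k, u, C, hC, sum_indicator_of_disjoint hdisj hval hout, rfl⟩

/-- common disjoint refinement of two simple functions -/
lemma refine₂ (hR : IsSetRing R) (hμ : IsPremeasure R μ) {f : X → E} {g : X → F}
    {v : E} {w : F} (hf : ISI f v) (hg : ISI g w) :
    ∃ (k : ℕ) (C : Fin k → Set X) (e : Fin k → E) (e' : Fin k → F),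
      (∀ j, C j ∈ R) ∧ Pairwise (Function.onFun Disjoint C) ∧ (∀ j, (C j).Nonempty) ∧
      (∀ j, ∀ x ∈ C j, f x = e j ∧ g x = e' j) ∧
      (∀ x, (∀ j, x ∉ C j) → f x = 0 ∧ g x = 0) ∧
      v = ∑ j, μ (C j) • e j ∧ w = ∑ j, μ (C j) • e' j := by
  obtain ⟨n, c, A, hA, hfx, hv⟩ := hf
  obtain ⟨m, d, B, hB, hgx, hw⟩ := hg
  set c'' : Fin (n + m) → E × F :=
    Fin.append (fun i => (c i, 0)) (fun i => ((0 : E), d i)) with hc''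
  set A'' : Fin (n + m) → Set X := Fin.append A B with hA''
  have hA''R : ∀ i, A'' i ∈ R := by
    intro i
    refine Fin.addCases (fun i => ?_) (fun i => ?_) i
    · simpa [hA'', Fin.append_left] using hA i
    · simpa [hA'', Fin.append_right] using hB i
  have hpair : ∀ x, (f x, g x) = ∑ i, (A'' i).indicator (fun _ => c'' i) x := by
    intro x
    have h1 : ∀ (S : Set X) (p : E × F),
        S.indicator (fun _ => p) x = (S.indicator (fun _ => p.1) x, S.indicator (fun _ => p.2) x) := by
      intro S p
      by_cases hx : x ∈ S <;> simp [Set.indicator_apply, hx] <;> rfl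
    rw [Finset.sum_congr rfl fun i _ => h1 (A'' i) (c'' i), ← prod_mk_sum]
    refine Prod.ext ?_ ?_
    · simp only
      rw [hfx x, Fin.sum_univ_add]
      simp [hc'', hA'', Fin.append_left, Fin.append_right]
    · simp only
      rw [hgx x, Fin.sum_univ_add]
      simp [hc'', hA'', Fin.append_left, Fin.append_right]
  have hint : (v, w) = ∑ i, μ (A'' i) • c'' i := by
    have h2 : ∀ i, μ (A'' i) • c'' i
        = ((μ (A'' i) • (c'' i).1, μ (A'' i) • (c'' i).2) : E × F) := by
      intro i; exact Prod.ext (by simp) (by simp)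
    rw [Finset.sum_congr rfl fun i _ => h2 i, ← prod_mk_sum]
    refine Prod.ext ?_ ?_
    · simp only
      rw [hv, Fin.sum_univ_add]
      simp [hc'', hA'', Fin.append_left, Fin.append_right]
    · simp only
      rw [hw, Fin.sum_univ_add]
      simp [hc'', hA'', Fin.append_left, Fin.append_right]
  obtain ⟨k, C, ee, hCR, hdisj, hne, hpt, hI⟩ := master hR hμ A'' hA''R c''
  have hsum2 : ((∑ j, μ (C j) • (ee j).1, ∑ j, μ (C j) • (ee j).2) : E × F)
      = ∑ j, μ (C j) • ee j := by
    rw [prod_mk_sum]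
    exact Finset.sum_congr rfl fun j _ => Prod.ext (by simp) (by simp)
  have hvw := Prod.ext_iff.1 ((hint.trans hI).trans hsum2.symm)
  refine ⟨k, C, fun j => (ee j).1, fun j => (ee j).2, hCR, hdisj, hne, ?_, ?_, ?_, ?_⟩
  · intro j x hx
    have := (hpair x).trans (hpt x)
    rw [Finset.sum_eq_single_of_mem j (Finset.mem_univ j)] at this
    · rw [Set.indicator_of_mem hx] at this
      exact ⟨congrArg Prod.fst this, congrArg Prod.snd this⟩
    · intro j' _ hne'
      exact Set.indicator_of_notMem
        (fun hx' => Set.disjoint_left.1 (hdisj hne') hx' hx) (fun _ => ee j')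
  · intro x hx
    have := (hpair x).trans (hpt x)
    rw [Finset.sum_eq_zero (fun j _ => Set.indicator_of_notMem (hx j) (fun _ => ee j))] at this
    exact ⟨congrArg Prod.fst this, congrArg Prod.snd this⟩
  · exact hvw.1
  · exact hvw.2

lemma isi_mono (hR : IsSetRing R) (hμ : IsPremeasure R μ) {f g : X → ℝ} {v w : ℝ}
    (hf : ISI f v) (hg : ISI g w) (hfg : ∀ x, f x ≤ g x) : v ≤ w := by
  obtain ⟨k, C, e, e', hCR, hdisj, hne, hval, hout, hv, hw⟩ := refine₂ hR hμ hf hg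
  rw [hv, hw]
  refine Finset.sum_le_sum fun j _ => ?_
  obtain ⟨x, hx⟩ := hne j
  obtain ⟨h1, h2⟩ := hval j x hx
  have : e j ≤ e' j := h1 ▸ h2 ▸ hfg x
  exact smul_le_smul_of_nonneg_left this (measure_nonneg hμ (hCR j))

lemma isi_norm_le (hR : IsSetRing R) (hμ : IsPremeasure R μ) {f : X → E} {v : E} {w : ℝ}
    (hf : ISI f v) (hw : ISI (fun x => ‖f x‖) w) : ‖v‖ ≤ w := by
  obtain ⟨k, C, e, e', hCR, hdisj, hne, hval, hout, hv, hww⟩ := refine₂ hR hμ hf hw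
  rw [hv, hww]
  refine (norm_sum_le _ _).trans (Finset.sum_le_sum fun j _ => ?_)
  obtain ⟨x, hx⟩ := hne j
  obtain ⟨h1, h2⟩ := hval j x hx
  rw [norm_smul, Real.norm_eq_abs, abs_of_nonneg (measure_nonneg hμ (hCR j)), smul_eq_mul]
  have : e' j = ‖e j‖ := by rw [← h1, ← h2]
  rw [this]

lemma isi_norm_exists (hR : IsSetRing R) (hμ : IsPremeasure R μ) {f : X → E} {v : E}
    (hf : ISI f v) : ∃ w, ISI (fun x => ‖f x‖) w := by
  obtain ⟨k, C, e, e', hCR, hdisj, hne, hval, hout, hv, -⟩ :=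
    refine₂ hR hμ hf (isi_zero (E := ℝ))
  refine ⟨∑ j, μ (C j) • ‖e j‖, isi_of_partition hCR hdisj (fun j x hx => ?_) (fun x hx => ?_)⟩
  · rw [(hval j x hx).1]
  · rw [(hout x hx).1, norm_zero]

lemma isi_sum_range {t : ℕ → X → E} {d : ℕ → E} (ht : ∀ n, ISI (t n) (d n)) (k : ℕ) :
    ISI (fun x => ∑ n ∈ Finset.range k, t n x) (∑ n ∈ Finset.range k, d n) := by
  induction k with
  | zero => simpa using isi_zero (E := E) (R := R) (μ := μ)
  | succ m ih =>
    have := isi_add ih (ht m)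
    rw [Finset.sum_range_succ]
    exact isi_congr (fun x => (Finset.sum_range_succ (fun n => t n x) m).symm) this

end Calc
end Stmt3Aux
namespace Stmt3Aux
section Sigma
variable {X : Type*} {R : Set (Set X)} {μ : Set X → ℝ}

local notation "ISI" => IsSimpleWithIntegral R μ

lemma isi_no_empty (hR : IsSetRing R) (h0 : (∅ : Set X) ∉ R) {E : Type*}
    [NormedAddCommGroup E] [NormedSpace ℝ E] {f : X → E} {v : E} (hf : ISI f v) : v = 0 := by
  obtain ⟨n, c, A, hA, hfx, hv⟩ := hf
  cases n with
  | zero => simpa using hv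
  | succ m => exact absurd (by simpa using diff_mem hR (hA 0) (hA 0)) h0

lemma sigma_lemma (hR : IsSetRing R) (hμ : IsPremeasure R μ)
    {s : X → ℝ} {a : ℝ} (hs : ISI s a)
    {t : ℕ → X → ℝ} {e : ℕ → ℝ} (ht : ∀ n, ISI (t n) (e n))
    (htpos : ∀ n x, 0 ≤ t n x) (hesum : Summable e)
    (hle : ∀ x, ENNReal.ofReal (s x) ≤ ∑' n, ENNReal.ofReal (t n x)) :
    a ≤ ∑' n, e n := by
  classical
  have hepos : ∀ n, 0 ≤ e n := fun n =>
    isi_mono hR hμ isi_zero (ht n) (fun x => htpos n x)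
  have htsum_nonneg : 0 ≤ ∑' n, e n := tsum_nonneg hepos
  by_cases h0 : (∅ : Set X) ∈ R
  swap
  · rw [isi_no_empty hR h0 hs]; exact htsum_nonneg
  obtain ⟨k, C, σv, ez, hCR, hdisj, hne, hval, hout, ha, -⟩ :=
    refine₂ hR hμ hs (isi_zero (E := ℝ) (R := R) (μ := μ))
  set T : ℕ → X → ℝ := fun m x => ∑ n ∈ Finset.range m, t n x with hT
  have hTisi : ∀ m, ISI (T m) (∑ n ∈ Finset.range m, e n) := fun m => isi_sum_range ht m
  have hTnonneg : ∀ m x, 0 ≤ T m x := fun m x =>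
    Finset.sum_nonneg fun n _ => htpos n x
  have hTmono : ∀ x, Monotone fun m => T m x := by
    intro x m m' hmm
    exact Finset.sum_le_sum_of_subset_of_nonneg
      (Finset.range_subset_range.2 hmm) (fun n _ _ => htpos n x)
  -- level sets of T are in the ring
  have hlevel : ∀ (m : ℕ) (b : ℝ), 0 < b → {x | b ≤ T m x} ∈ R := by
    intro m b hb
    obtain ⟨kT, F, τ, τz, hFR, hFdisj, hFne, hFval, hFout, -, -⟩ :=
      refine₂ hR hμ (hTisi m) (isi_zero (E := ℝ) (R := R) (μ := μ))
    have : {x | b ≤ T m x} = ⋃ l ∈ Finset.univ.filter (fun l => b ≤ τ l), F l := by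
      ext x
      simp only [Set.mem_setOf_eq, Set.mem_iUnion, Finset.mem_filter, Finset.mem_univ,
        true_and, exists_prop]
      constructor
      · intro hx
        by_cases hxF : ∃ l, x ∈ F l
        · obtain ⟨l, hl⟩ := hxF
          refine ⟨l, ?_, hl⟩
          rw [← (hFval l x hl).1]
          exact hx
        · push_neg at hxF
          rw [(hFout x hxF).1] at hx
          linarith
      · rintro ⟨l, hbl, hl⟩
        rw [(hFval l x hl).1]
        exact hbl
    rw [this]
    exact biUnion_mem hR h0 fun l _ => hFR l
  have key : ∀ θ : ℝ, 0 < θ → θ < 1 → θ * a ≤ ∑' n, e n := by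
    intro θ hθ0 hθ1
    set D : Fin k → ℕ → Set X :=
      fun j m => if 0 < σv j then C j ∩ {x | θ * σv j ≤ T m x} else ∅ with hD
    have hDR : ∀ j m, D j m ∈ R := by
      intro j m
      simp only [hD]
      split_ifs with hσ
      · exact inter_mem hR (hCR j) (hlevel m _ (by positivity))
      · exact h0
    have hDsub : ∀ j m, D j m ⊆ C j := by
      intro j m
      simp only [hD]; split_ifs
      · exact Set.inter_subset_left
      · exact Set.empty_subset _
    have hDdisj : ∀ m, Pairwise (Function.onFun Disjoint (fun j => D j m)) := by
      intro m j j' hjj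
      exact Set.disjoint_of_subset (hDsub j m) (hDsub j' m) (hdisj hjj)
    have hDmono : ∀ j, Monotone (D j) := by
      intro j m m' hmm
      simp only [hD]
      split_ifs with hσ
      · refine Set.inter_subset_inter_right _ fun x hx => ?_
        exact le_trans hx (hTmono x hmm)
      · exact le_rfl
    have hDunion : ∀ j, 0 < σv j → (⋃ m, D j m) = C j := by
      intro j hσ
      apply Set.eq_of_subset_of_subset
      · exact Set.iUnion_subset fun m => hDsub j m
      · intro x hx
        have hsx : s x = σv j := (hval j x hx).1
        have hσθ : θ * σv j < σv j := by nlinarith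
        have hex : ∃ m, θ * σv j ≤ T m x := by
          by_cases hsum : Summable fun n => t n x
          · have heq : ENNReal.ofReal (∑' n, t n x) = ∑' n, ENNReal.ofReal (t n x) :=
              ENNReal.ofReal_tsum_of_nonneg (fun n => htpos n x) hsum
            have h1 : ENNReal.ofReal (s x) ≤ ENNReal.ofReal (∑' n, t n x) := by
              rw [heq]; exact hle x
            have h2 : s x ≤ ∑' n, t n x :=
              (ENNReal.ofReal_le_ofReal_iff (tsum_nonneg fun n => htpos n x)).1 h1
            have h3 : θ * σv j < ∑' n, t n x := by rw [hsx] at h2; linarith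
            have := Filter.Tendsto.eventually_const_le h3 hsum.hasSum.tendsto_sum_nat
            exact this.exists
          · have htend : Filter.Tendsto (fun m => T m x) Filter.atTop Filter.atTop := by
              by_contra hcon
              exact hsum ((summable_iff_not_tendsto_nat_atTop_of_nonneg
                (fun n => htpos n x)).2 hcon)
            exact (htend.eventually_ge_atTop (θ * σv j)).exists
        obtain ⟨m, hm⟩ := hex
        exact Set.mem_iUnion.2 ⟨m, by simp only [hD]; simp only [hσ, if_pos]; exact ⟨hx, hm⟩⟩
    set cθ : Fin k → ℝ := fun j => if 0 < σv j then θ * σv j else 0 with hcθ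
    have hEk : ∀ m, ∑ j, μ (D j m) • cθ j ≤ ∑' n, e n := by
      intro m
      have hφ : ISI (fun x => ∑ j, (D j m).indicator (fun _ => cθ j) x)
          (∑ j, μ (D j m) • cθ j) := ⟨k, cθ, fun j => D j m, fun j => hDR j m, fun x => rfl, rfl⟩
      have hφle : ∀ x, ∑ j, (D j m).indicator (fun _ => cθ j) x ≤ T m x := by
        intro x
        by_cases hx : ∃ j, x ∈ D j m
        · obtain ⟨j, hj⟩ := hx
          rw [Finset.sum_eq_single_of_mem j (Finset.mem_univ j)]
          · rw [Set.indicator_of_mem hj]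
            have hσ : 0 < σv j := by
              by_contra hσ
              simp only [hD] at hj; simp only [if_neg hσ] at hj
              exact hj
            have : x ∈ {x | θ * σv j ≤ T m x} := by
              simp only [hD] at hj; simp only [if_pos hσ] at hj
              exact hj.2
            simp only [hcθ]; simp only [if_pos hσ]
            exact this
          · intro j' _ hne'
            exact Set.indicator_of_notMem
              (fun hx' => Set.disjoint_left.1 (hDdisj m hne') hx' hj) (fun _ => cθ j')
        · push_neg at hx
          rw [Finset.sum_eq_zero fun j _ => Set.indicator_of_notMem (hx j) (fun _ => cθ j)]
          exact hTnonneg m x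
      refine le_trans (isi_mono hR hμ hφ (hTisi m) hφle) ?_
      exact Summable.sum_le_tsum _ (fun n _ => hepos n) hesum
    have hlim : Filter.Tendsto (fun m => ∑ j, μ (D j m) • cθ j) Filter.atTop
        (𝓝 (∑ j, μ (C j) • cθ j)) := by
      refine tendsto_finset_sum _ fun j _ => ?_
      by_cases hσ : 0 < σv j
      · have := tendsto_measure hR hμ (fun m => hDR j m) (hDmono j)
          (by rw [hDunion j hσ]; exact hCR j)
        rw [hDunion j hσ] at this
        exact this.smul_const (cθ j)
      · have hz : ∀ m, D j m = ∅ := by intro m; simp only [hD]; simp [hσ]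
        have hz2 : cθ j = 0 := by simp only [hcθ]; simp [hσ]
        simp only [hz, hz2, smul_zero]
        exact tendsto_const_nhds
    have hfin : ∑ j, μ (C j) • cθ j ≤ ∑' n, e n :=
      le_of_tendsto hlim (Filter.Eventually.of_forall hEk)
    refine le_trans ?_ hfin
    rw [ha, Finset.mul_sum]
    refine Finset.sum_le_sum fun j _ => ?_
    simp only [hcθ]
    split_ifs with hσ
    · simp only [smul_eq_mul]; ring_nf; rfl
    · push_neg at hσ
      have hμj := measure_nonneg hμ (hCR j)
      have h1 : μ (C j) * σv j ≤ 0 := mul_nonpos_iff.2 (Or.inl ⟨hμj, hσ⟩)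
      have h2 := mul_le_mul_of_nonneg_left h1 (le_of_lt hθ0)
      simp only [smul_eq_mul, mul_zero]
      linarith
  by_contra hcon
  push_neg at hcon
  have ha0 : 0 < a := lt_of_le_of_lt htsum_nonneg hcon
  set θ : ℝ := ((∑' n, e n) / a + 1) / 2 with hθ
  have hθ0 : 0 < θ := by positivity
  have hθ1 : θ < 1 := by
    have : (∑' n, e n) / a < 1 := (div_lt_one ha0).2 hcon
    rw [hθ]; linarith
  have := key θ hθ0 hθ1
  rw [hθ] at this
  rw [div_add' _ _ _ (ne_of_gt ha0)] at this
  rw [div_mul_eq_mul_div, div_mul_eq_mul_div, mul_comm, ← div_mul_eq_mul_div] at this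
  rw [mul_div_assoc, div_self (ne_of_gt ha0)] at this
  nlinarith [this]

end Sigma
end Stmt3Aux
namespace Stmt3Aux
section Fund
variable {X : Type*} {R : Set (Set X)} {μ : Set X → ℝ}

local notation "ISI" => IsSimpleWithIntegral R μ

set_option maxHeartbeats 1000000 in
lemma fundamental (hR : IsSetRing R) (hμ : IsPremeasure R μ)
    {s0 : X → ℝ} {a : ℝ} (hs : ISI s0 a)
    {p q : ℕ → X → ℝ} {d e d' e' : ℕ → ℝ}
    (hp : ∀ n, ISI (p n) (d n)) (hpa : ∀ n, ISI (fun x => |p n x|) (e n))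
    (hq : ∀ n, ISI (q n) (d' n)) (hqa : ∀ n, ISI (fun x => |q n x|) (e' n))
    (he : Summable e) (he' : Summable e')
    (hle : ∀ x, Summable (fun n => |p n x|) → Summable (fun n => |q n x|) →
      s0 x ≤ (∑' n, p n x) + ∑' n, q n x) :
    a ≤ (∑' n, d n) + ∑' n, d' n := by
  have habs : ∀ n, |d n| ≤ e n := by
    intro n
    have h1 : ISI (fun x => ‖p n x‖) (e n) :=
      isi_congr (fun x => (Real.norm_eq_abs (p n x)).symm) (hpa n)
    have := isi_norm_le hR hμ (hp n) h1
    rwa [Real.norm_eq_abs] at this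
  have habs' : ∀ n, |d' n| ≤ e' n := by
    intro n
    have h1 : ISI (fun x => ‖q n x‖) (e' n) :=
      isi_congr (fun x => (Real.norm_eq_abs (q n x)).symm) (hqa n)
    have := isi_norm_le hR hμ (hq n) h1
    rwa [Real.norm_eq_abs] at this
  have hdabs : Summable fun n => |d n| :=
    he.of_nonneg_of_le (fun n => abs_nonneg _) habs
  have hd : Summable d := hdabs.of_abs
  have hdabs' : Summable fun n => |d' n| :=
    he'.of_nonneg_of_le (fun n => abs_nonneg _) habs'
  have hd' : Summable d' := hdabs'.of_abs
  refine le_of_forall_pos_le_add fun ε hε => ?_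
  have hδ : 0 < ε / 4 := by positivity
  obtain ⟨M, hM, hM'⟩ := (((tendsto_sum_nat_add e).eventually_lt_const hδ).and
    ((tendsto_sum_nat_add e').eventually_lt_const hδ)).exists
  -- partial sums of d are close to the total sums
  have tail_d : |(∑' n, d n) - ∑ n ∈ Finset.range M, d n| ≤ ∑' n, e (n + M) := by
    rw [← Summable.sum_add_tsum_nat_add M hd, add_sub_cancel_left]
    calc |∑' n, d (n + M)| ≤ ∑' n, |d (n + M)| := by
          simpa [Real.norm_eq_abs] using
            norm_tsum_le_tsum_norm (f := fun n => d (n + M))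
              (by simpa [Real.norm_eq_abs] using (summable_nat_add_iff M).2 hdabs)
      _ ≤ ∑' n, e (n + M) := Summable.tsum_le_tsum (fun n => habs _)
            ((summable_nat_add_iff M).2 hdabs) ((summable_nat_add_iff M).2 he)
  have tail_d' : |(∑' n, d' n) - ∑ n ∈ Finset.range M, d' n| ≤ ∑' n, e' (n + M) := by
    rw [← Summable.sum_add_tsum_nat_add M hd', add_sub_cancel_left]
    calc |∑' n, d' (n + M)| ≤ ∑' n, |d' (n + M)| := by
          simpa [Real.norm_eq_abs] using
            norm_tsum_le_tsum_norm (f := fun n => d' (n + M))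
              (by simpa [Real.norm_eq_abs] using (summable_nat_add_iff M).2 hdabs')
      _ ≤ ∑' n, e' (n + M) := Summable.tsum_le_tsum (fun n => habs' _)
            ((summable_nat_add_iff M).2 hdabs') ((summable_nat_add_iff M).2 he')
  set W : X → ℝ := fun x => ∑ n ∈ Finset.range M, (p n x + q n x) with hWdef
  have hW : ISI W (∑ n ∈ Finset.range M, (d n + d' n)) :=
    isi_sum_range (fun n => isi_add (hp n) (hq n)) M
  have hs' : ISI (fun x => s0 x + -(W x)) (a + -(∑ n ∈ Finset.range M, (d n + d' n))) :=
    isi_add hs (isi_neg hW)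
  set t : ℕ → X → ℝ := fun n x => |p (n + M) x| + |q (n + M) x| with htdef
  have hti : ∀ n, ISI (t n) (e (n + M) + e' (n + M)) :=
    fun n => isi_add (hpa (n + M)) (hqa (n + M))
  have htpos : ∀ n x, 0 ≤ t n x := fun n x => add_nonneg (abs_nonneg _) (abs_nonneg _)
  have htsumm : Summable fun n => e (n + M) + e' (n + M) :=
    ((summable_nat_add_iff M).2 he).add ((summable_nat_add_iff M).2 he')
  have hptw : ∀ x, ENNReal.ofReal (s0 x + -(W x)) ≤ ∑' n, ENNReal.ofReal (t n x) := by
    intro x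
    by_cases hP : Summable fun n => |p n x|
    · by_cases hQ : Summable fun n => |q n x|
      · have hPs : Summable fun n => p n x := hP.of_abs
        have hQs : Summable fun n => q n x := hQ.of_abs
        have h1 := hle x hP hQ
        have hPt := Summable.sum_add_tsum_nat_add M hPs
        have hQt := Summable.sum_add_tsum_nat_add M hQs
        have hWx : W x = ∑ n ∈ Finset.range M, p n x + ∑ n ∈ Finset.range M, q n x := by
          rw [hWdef]; exact Finset.sum_add_distrib
        have h2 : s0 x + -(W x) ≤ (∑' n, p (n + M) x) + ∑' n, q (n + M) x := by
          rw [hWx]; linarith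
        have h3 : (∑' n, p (n + M) x) ≤ ∑' n, |p (n + M) x| :=
          Summable.tsum_le_tsum (fun n => le_abs_self _) ((summable_nat_add_iff M).2 hPs)
            ((summable_nat_add_iff M).2 hP)
        have h4 : (∑' n, q (n + M) x) ≤ ∑' n, |q (n + M) x| :=
          Summable.tsum_le_tsum (fun n => le_abs_self _) ((summable_nat_add_iff M).2 hQs)
            ((summable_nat_add_iff M).2 hQ)
        have h5 : (∑' n, |p (n + M) x|) + ∑' n, |q (n + M) x| = ∑' n, t n x :=
          (Summable.tsum_add ((summable_nat_add_iff M).2 hP) ((summable_nat_add_iff M).2 hQ)).symm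
        have h6 : s0 x + -(W x) ≤ ∑' n, t n x := by linarith
        calc ENNReal.ofReal (s0 x + -(W x)) ≤ ENNReal.ofReal (∑' n, t n x) :=
              ENNReal.ofReal_le_ofReal h6
          _ = ∑' n, ENNReal.ofReal (t n x) :=
              ENNReal.ofReal_tsum_of_nonneg (fun n => htpos n x)
                (((summable_nat_add_iff M).2 hP).add ((summable_nat_add_iff M).2 hQ))
      · have hnt : ¬ Summable fun n => t n x := by
          intro hsum
          refine hQ ((summable_nat_add_iff M).1 ?_)
          exact hsum.of_nonneg_of_le (fun n => abs_nonneg _)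
            (fun n => le_add_of_nonneg_left (abs_nonneg _))
        have htop : (∑' n, ENNReal.ofReal (t n x)) = ⊤ := by
          by_contra hne2
          have hs2 := ENNReal.summable_toReal hne2
          exact hnt (hs2.congr fun n => ENNReal.toReal_ofReal (htpos n x))
        rw [htop]; exact le_top
    · have hnt : ¬ Summable fun n => t n x := by
        intro hsum
        refine hP ((summable_nat_add_iff M).1 ?_)
        exact hsum.of_nonneg_of_le (fun n => abs_nonneg _)
          (fun n => le_add_of_nonneg_right (abs_nonneg _))
      have htop : (∑' n, ENNReal.ofReal (t n x)) = ⊤ := by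
        by_contra hne2
        have hs2 := ENNReal.summable_toReal hne2
        exact hnt (hs2.congr fun n => ENNReal.toReal_ofReal (htpos n x))
      rw [htop]; exact le_top
  have hkey := sigma_lemma hR hμ hs' hti htpos htsumm hptw
  have hsplit : (∑' n, (e (n + M) + e' (n + M)))
      = (∑' n, e (n + M)) + ∑' n, e' (n + M) :=
    Summable.tsum_add ((summable_nat_add_iff M).2 he) ((summable_nat_add_iff M).2 he')
  have hWsum : ∑ n ∈ Finset.range M, (d n + d' n)
      = ∑ n ∈ Finset.range M, d n + ∑ n ∈ Finset.range M, d' n := Finset.sum_add_distrib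
  rw [hsplit] at hkey
  have b1 := abs_le.1 tail_d
  have b2 := abs_le.1 tail_d'
  have hten : 0 ≤ ∑' n, e (n + M) := tsum_nonneg fun n => le_trans (abs_nonneg _) (habs _)
  have hten' : 0 ≤ ∑' n, e' (n + M) := tsum_nonneg fun n => le_trans (abs_nonneg _) (habs' _)
  rw [hWsum] at hkey
  linarith [hM, hM']

end Fund
end Stmt3Aux
set_option maxHeartbeats 1000000 in
/-- If `f ≃ ∑ gₙ` then `∑ ∫ gₙ` converges and `‖∑ ∫ gₙ‖ ≤ ∫ ‖f‖`. -/
theorem stmt3 {X E : Type*} [NormedAddCommGroup E] [NormedSpace ℝ E] [CompleteSpace E]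
    {R : Set (Set X)} {μ : Set X → ℝ} (hR : IsSetRing R) (hμ : IsPremeasure R μ)
    (f : X → E) (g : ℕ → X → E) (hfg : SeriesExpansion R μ f g)
    (J : ℕ → E) (hJ : ∀ n, IsSimpleWithIntegral R μ (g n) (J n)) :
    (∃ I, HasSum J I) ∧
    ∀ (I : E) (c : ℝ), HasSum J I →
      HasBochnerIntegral R μ (fun x => ‖f x‖) c → ‖I‖ ≤ c := by
  classical
  open Stmt3Aux in
  obtain ⟨hgsimple, ⟨b, hb, hbsum⟩, hfsum⟩ := hfg
  have hJb : ∀ n, ‖J n‖ ≤ b n := fun n => isi_norm_le hR hμ (hJ n) (hb n)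
  have hJnorm : Summable fun n => ‖J n‖ :=
    hbsum.of_nonneg_of_le (fun n => norm_nonneg _) hJb
  have hJsum : Summable J := hJnorm.of_norm
  refine ⟨⟨∑' n, J n, hJsum.hasSum⟩, ?_⟩
  intro I c hI hc
  obtain ⟨h, ⟨hhsimple, ⟨b', hb', hb'sum⟩, hhsum⟩, K, hK, hKc⟩ := hc
  refine le_of_forall_pos_le_add fun ε hε => ?_
  have hδ : 0 < ε / 2 := by positivity
  obtain ⟨N, hN⟩ := ((tendsto_sum_nat_add b).eventually_lt_const hδ).exists
  -- the tail of J
  have htail : HasSum (fun n => J (n + N)) (I - ∑ n ∈ Finset.range N, J n) := by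
    rw [hasSum_nat_add_iff N]
    simpa using hI
  have h1 : ‖I - ∑ n ∈ Finset.range N, J n‖ ≤ ∑' n, b (n + N) := by
    rw [← htail.tsum_eq]
    refine (norm_tsum_le_tsum_norm (f := fun n => J (n + N))
      ((summable_nat_add_iff N).2 hJnorm)).trans ?_
    exact Summable.tsum_le_tsum (fun n => hJb _) ((summable_nat_add_iff N).2 hJnorm)
      ((summable_nat_add_iff N).2 hbsum)
  -- the head of J is the integral of a simple function s
  have hsI : IsSimpleWithIntegral R μ (fun x => ∑ n ∈ Finset.range N, g n x)
      (∑ n ∈ Finset.range N, J n) := isi_sum_range hJ N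
  obtain ⟨w, hw⟩ := isi_norm_exists hR hμ hsI
  have h4 : ‖∑ n ∈ Finset.range N, J n‖ ≤ w := isi_norm_le hR hμ hsI hw
  -- the fundamental lemma bounds w
  have h5 : w ≤ (∑' n, K n) + ∑' n, b (n + N) := by
    refine fundamental hR hμ hw hK
      (fun n => isi_congr (fun x => Real.norm_eq_abs (h n x)) (hb' n))
      (fun n => hb (n + N))
      (fun n => isi_congr (fun x => (abs_of_nonneg (norm_nonneg (g (n + N) x))).symm)
        (hb (n + N)))
      hb'sum ((summable_nat_add_iff N).2 hbsum) ?_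
    intro x hhx hgx
    have hgx' : Summable fun n => ‖g n x‖ := by
      refine (summable_nat_add_iff N).1 ?_
      exact hgx.congr fun n => abs_of_nonneg (norm_nonneg _)
    have hfx : HasSum (fun n => g n x) (f x) := hfsum x hgx'
    have hnormf : HasSum (fun n => h n x) (‖f x‖) := by
      refine hhsum x ?_
      exact hhx.congr fun n => (Real.norm_eq_abs (h n x)).symm
    have hgtail : HasSum (fun n => g (n + N) x) (f x - ∑ n ∈ Finset.range N, g n x) := by
      rw [hasSum_nat_add_iff (f := fun n => g n x) N]
      simpa using hfx
    have hb1 : ‖f x - ∑ n ∈ Finset.range N, g n x‖ ≤ ∑' n, ‖g (n + N) x‖ := by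
      rw [← hgtail.tsum_eq]
      exact norm_tsum_le_tsum_norm (f := fun n => g (n + N) x) ((summable_nat_add_iff N).2 hgx')
    have hb2 : ‖f x‖ = ∑' n, h n x := hnormf.tsum_eq.symm
    have hb3 : ‖∑ n ∈ Finset.range N, g n x‖
        ≤ ‖f x‖ + ‖f x - ∑ n ∈ Finset.range N, g n x‖ := by
      calc ‖∑ n ∈ Finset.range N, g n x‖
          = ‖f x - (f x - ∑ n ∈ Finset.range N, g n x)‖ := by rw [sub_sub_cancel]
        _ ≤ ‖f x‖ + ‖f x - ∑ n ∈ Finset.range N, g n x‖ := norm_sub_le _ _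
    calc ‖∑ n ∈ Finset.range N, g n x‖
        ≤ ‖f x‖ + ‖f x - ∑ n ∈ Finset.range N, g n x‖ := hb3
      _ ≤ (∑' n, h n x) + ∑' n, ‖g (n + N) x‖ := by rw [← hb2]; linarith
  have hKc' : (∑' n, K n) = c := hKc.tsum_eq
  have hfinal : ‖I‖ ≤ ‖∑ n ∈ Finset.range N, J n‖ + ‖I - ∑ n ∈ Finset.range N, J n‖ := by
    have := norm_add_le (∑ n ∈ Finset.range N, J n) (I - ∑ n ∈ Finset.range N, J n)
    simpa using this
  rw [hKc'] at h5
  linarith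
end

section
/- If f ≃ f₁ + f₂ + ⋯ and f ≃ g₁ + g₂ + ⋯ are two expansions of the same function f : X → E in series of simple functions, then ∑ₙ ∫ fₙ = ∑ₙ ∫ gₙ; hence the Bochner integral ∫ f := ∑ₙ ∫ fₙ is well defined. -/
open Filter Topology

namespace StmtAux

open MeasureTheory Set

variable {X : Type*} {R : Set (Set X)} {μ : Set X → ℝ}

lemma inter_mem (hR : _root_.IsSetRing R) {A B : Set X} (hA : A ∈ R) (hB : B ∈ R) : A ∩ B ∈ R := by
  have h := (hR A hA (A \ B) (hR A hA B hB).2).2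
  have : A \ (A \ B) = A ∩ B := by ext x; simp (config := {contextual := true}) [and_comm]
  rwa [this] at h

lemma mu_empty (hμ : IsPremeasure R μ) (h0 : ∅ ∈ R) : μ ∅ = 0 := by
  have h := hμ.2 (fun _ => ∅) (fun _ => h0)
    (by intro i j hij; simp [Function.onFun]) (by simpa using h0)
  have h2 : Tendsto (fun _ : ℕ => μ ∅) atTop (𝓝 0) := h.summable.tendsto_atTop_zero
  exact tendsto_nhds_unique tendsto_const_nhds h2

lemma mu_union (hR : _root_.IsSetRing R) (hμ : IsPremeasure R μ) {A B : Set X}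
    (hA : A ∈ R) (hB : B ∈ R) (hd : Disjoint A B) : μ (A ∪ B) = μ A + μ B := by
  classical
  have h0 : ∅ ∈ R := by simpa using (hR A hA A hA).2
  set s : ℕ → Set X := fun n => if n = 0 then A else if n = 1 then B else ∅ with hs
  have hmem : ∀ n, s n ∈ R := by intro n; simp only [hs]; split_ifs <;> assumption
  have hdisj : Pairwise (Function.onFun Disjoint s) := by
    intro i j hij
    simp only [Function.onFun, hs]
    split_ifs <;> first
      | (exfalso; omega)
      | exact hd
      | exact hd.symm
      | simp
  have hU : (⋃ n, s n) = A ∪ B := by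
    apply Set.Subset.antisymm
    · refine Set.iUnion_subset fun n => ?_
      simp only [hs]; split_ifs <;> simp
    · refine Set.union_subset ?_ ?_
      · exact le_trans (by simp [hs]) (Set.subset_iUnion s 0)
      · exact le_trans (by simp [hs]) (Set.subset_iUnion s 1)
  have h := hμ.2 s hmem hdisj (hU ▸ (hR A hA B hB).1)
  rw [hU] at h
  have h2 : HasSum (fun n => μ (s n)) (∑ n ∈ ({0, 1} : Finset ℕ), μ (s n)) := by
    refine hasSum_sum_of_ne_finset_zero ?_
    intro n hn
    simp only [Finset.mem_insert, Finset.mem_singleton, not_or] at hn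
    simp [hs, hn.1, hn.2, mu_empty hμ h0]
  rw [Finset.sum_pair (by norm_num)] at h2
  simpa [hs] using h.unique h2

lemma mu_mono (hR : _root_.IsSetRing R) (hμ : IsPremeasure R μ) {A B : Set X}
    (hA : A ∈ R) (hB : B ∈ R) (hAB : A ⊆ B) : μ A ≤ μ B := by
  have hd : B \ A ∈ R := (hR B hB A hA).2
  have h := mu_union hR hμ hA hd disjoint_sdiff_self_right
  rw [Set.union_diff_cancel hAB] at h
  have := hμ.1 _ hd
  linarith

lemma partialSups_mem (hR : _root_.IsSetRing R) {f : ℕ → Set X} (hf : ∀ n, f n ∈ R) (n : ℕ) :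
    partialSups f n ∈ R := by
  induction n with
  | zero => simpa using hf 0
  | succ n ih =>
      rw [partialSups_add_one]
      simpa [Set.sup_eq_union] using (hR _ ih _ (hf (n + 1))).1

lemma disjointed_mem (hR : _root_.IsSetRing R) {f : ℕ → Set X} (hf : ∀ n, f n ∈ R) (n : ℕ) :
    disjointed f n ∈ R := by
  cases n with
  | zero => simpa [disjointed_zero] using hf 0
  | succ n =>
      rw [disjointed_add_one]
      exact (hR _ (hf (n + 1)) _ (partialSups_mem hR hf n)).2

lemma mu_sigma_superadd (hR : _root_.IsSetRing R) (hμ : IsPremeasure R μ) {A : Set X} (hA : A ∈ R)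
    {B : ℕ → Set X} (hB : ∀ n, B n ∈ R) (hcov : A ⊆ ⋃ n, B n) :
    ENNReal.ofReal (μ A) ≤ ∑' n, ENNReal.ofReal (μ (B n)) := by
  set C : ℕ → Set X := disjointed (fun n => A ∩ B n) with hC
  have hCm : ∀ n, C n ∈ R := disjointed_mem hR (fun n => inter_mem hR hA (hB n))
  have hCd : Pairwise (Function.onFun Disjoint C) := disjoint_disjointed _
  have hCU : (⋃ n, C n) = A := by
    rw [hC, iUnion_disjointed, ← Set.inter_iUnion]
    exact Set.inter_eq_self_of_subset_left hcov
  have hsum := hμ.2 C hCm hCd (hCU ▸ hA)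
  rw [hCU] at hsum
  calc ENNReal.ofReal (μ A) = ∑' n, ENNReal.ofReal (μ (C n)) := by
        rw [← hsum.tsum_eq, ENNReal.ofReal_tsum_of_nonneg (fun n => hμ.1 _ (hCm n)) hsum.summable]
    _ ≤ _ := ENNReal.tsum_le_tsum fun n =>
        ENNReal.ofReal_le_ofReal (mu_mono hR hμ (hCm n) (hB n)
          ((disjointed_subset _ n).trans Set.inter_subset_right))

end StmtAux

namespace StmtAux2
open MeasureTheory Set StmtAux

variable {X : Type*} {R : Set (Set X)} {μ : Set X → ℝ}

noncomputable def nuO (R : Set (Set X)) (μ : Set X → ℝ) (h0 : ∅ ∈ R) (hμ0 : μ ∅ = 0) :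
    OuterMeasure X :=
  MeasureTheory.inducedOuterMeasure (fun s (_ : s ∈ R) => ENNReal.ofReal (μ s)) h0
    (by simp [hμ0])

lemma nuO_eq (hR : _root_.IsSetRing R) (hμ : IsPremeasure R μ) (h0 : ∅ ∈ R) (hμ0 : μ ∅ = 0)
    {s : Set X} (hs : s ∈ R) : nuO R μ h0 hμ0 s = ENNReal.ofReal (μ s) := by
  have hext0 : extend (fun s (_ : s ∈ R) => ENNReal.ofReal (μ s)) ∅ = 0 :=
    extend_empty h0 (by simp [hμ0])
  refine le_antisymm ?_ ?_
  · exact (OuterMeasure.ofFunction_le (m_empty := hext0) s).trans_eq (extend_eq _ hs)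
  · show ENNReal.ofReal (μ s) ≤ OuterMeasure.ofFunction _ hext0 s
    rw [OuterMeasure.ofFunction_apply]
    refine le_iInf fun f => le_iInf fun hf => ?_
    by_cases hfr : ∀ n, f n ∈ R
    · refine (mu_sigma_superadd hR hμ hs hfr hf).trans (ENNReal.tsum_le_tsum fun n => ?_)
      exact le_of_eq (extend_eq (fun s (_ : s ∈ R) => ENNReal.ofReal (μ s)) (hfr n)).symm
    · obtain ⟨n, hn⟩ := not_forall.1 hfr
      exact le_trans (le_top.trans_eq (extend_eq_top _ hn).symm) (ENNReal.le_tsum n)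

lemma nuO_carath (hR : _root_.IsSetRing R) (hμ : IsPremeasure R μ) (h0 : ∅ ∈ R) (hμ0 : μ ∅ = 0)
    {s : Set X} (hs : s ∈ R) :
    MeasurableSet[(nuO R μ h0 hμ0).caratheodory] s := by
  have hext0 : extend (fun s (_ : s ∈ R) => ENNReal.ofReal (μ s)) ∅ = 0 :=
    extend_empty h0 (by simp [hμ0])
  show MeasurableSet[(OuterMeasure.ofFunction _ hext0).caratheodory] s
  refine OuterMeasure.ofFunction_caratheodory fun t => ?_
  by_cases ht : t ∈ R
  · have h1 : t ∩ s ∈ R := inter_mem hR ht hs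
    have h2 : t \ s ∈ R := (hR t ht s hs).2
    rw [extend_eq _ ht, extend_eq _ h1, extend_eq _ h2,
      ← ENNReal.ofReal_add (hμ.1 _ h1) (hμ.1 _ h2)]
    refine le_of_eq ?_
    congr 1
    rw [← mu_union hR hμ h1 h2 (disjoint_sdiff_self_right.mono_left Set.inter_subset_right),
      Set.inter_union_diff]
  · simp [extend_eq_top _ ht]

end StmtAux2

namespace StmtAux3
open MeasureTheory Set StmtAux

variable {X : Type*} {E : Type*} [NormedAddCommGroup E] [NormedSpace ℝ E] [CompleteSpace E]
variable {R : Set (Set X)} {μ : Set X → ℝ}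

lemma simple_integral [mX : MeasurableSpace X] (hμpos : ∀ A ∈ R, 0 ≤ μ A)
    (hRm : ∀ s ∈ R, MeasurableSet s)
    (ν : Measure X) (hν : ∀ s ∈ R, ν s = ENNReal.ofReal (μ s))
    {φ : X → E} {v : E} (hφ : IsSimpleWithIntegral R μ φ v) :
    Integrable φ ν ∧ ∫ x, φ x ∂ν = v := by
  obtain ⟨n, c, A, hA, hrep, hv⟩ := hφ
  have hφ_eq : φ = fun x => ∑ i, Set.indicator (A i) (fun _ => c i) x := funext hrep
  have hint : ∀ i : Fin n, Integrable (Set.indicator (A i) (fun _ => c i)) ν := by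
    intro i
    rw [integrable_indicator_iff (hRm _ (hA i))]
    exact integrableOn_const (by rw [hν _ (hA i)]; exact ENNReal.ofReal_ne_top)
  constructor
  · rw [hφ_eq]; exact integrable_finset_sum _ fun i _ => hint i
  · rw [hφ_eq, integral_finset_sum _ fun i _ => hint i, hv]
    refine Finset.sum_congr rfl fun i _ => ?_
    rw [integral_indicator_const _ (hRm _ (hA i)), measureReal_def, hν _ (hA i),
      ENNReal.toReal_ofReal (hμpos _ (hA i))]
end StmtAux3

namespace StmtAux4
open MeasureTheory Set StmtAux StmtAux3
open scoped ENNReal NNReal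

variable {X : Type*} {E : Type*} [NormedAddCommGroup E] [NormedSpace ℝ E] [CompleteSpace E]
variable {R : Set (Set X)} {μ : Set X → ℝ}

lemma key [mX : MeasurableSpace X] (hμpos : ∀ A ∈ R, 0 ≤ μ A)
    (hRm : ∀ s ∈ R, MeasurableSet s)
    (ν : Measure X) (hν : ∀ s ∈ R, ν s = ENNReal.ofReal (μ s))
    (f : X → E) (g : ℕ → X → E) (hfg : SeriesExpansion R μ f g)
    (J : ℕ → E) (hJ : ∀ n, IsSimpleWithIntegral R μ (g n) (J n))
    (I : E) (hI : HasSum J I) : I = ∫ x, f x ∂ν := by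
  obtain ⟨-, ⟨c, hc, hcsum⟩, hconv⟩ := hfg
  have hgint : ∀ n, Integrable (g n) ν := fun n => (simple_integral hμpos hRm ν hν (hJ n)).1
  have hgI : ∀ n, ∫ x, g n x ∂ν = J n := fun n => (simple_integral hμpos hRm ν hν (hJ n)).2
  have hnint : ∀ n, Integrable (fun x => ‖g n x‖) ν :=
    fun n => (simple_integral hμpos hRm ν hν (hc n)).1
  have hnI : ∀ n, ∫ x, ‖g n x‖ ∂ν = c n :=
    fun n => (simple_integral hμpos hRm ν hν (hc n)).2
  have hcnn : ∀ n, 0 ≤ c n := fun n => by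
    rw [← hnI n]; exact integral_nonneg fun x => norm_nonneg _
  have hsumint : Summable fun n => ∫ x, ‖g n x‖ ∂ν := by
    simpa [funext hnI] using hcsum
  -- a.e. summability
  have hae : ∀ᵐ x ∂ν, Summable fun n => ‖g n x‖ := by
    have hmeas : ∀ n, AEMeasurable (fun x => (‖g n x‖₊ : ℝ≥0∞)) ν :=
      fun n => (hgint n).aestronglyMeasurable.enorm
    have hlin : ∫⁻ x, ∑' n, (‖g n x‖₊ : ℝ≥0∞) ∂ν ≠ ∞ := by
      rw [lintegral_tsum hmeas]
      have heq : ∀ n, ∫⁻ x, (‖g n x‖₊ : ℝ≥0∞) ∂ν = ENNReal.ofReal (c n) := by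
        intro n
        rw [← hnI n, ofReal_integral_eq_lintegral_ofReal (hnint n)
          (Filter.Eventually.of_forall fun x => norm_nonneg _)]
        congr 1
        funext x
        rw [ofReal_norm, enorm_eq_nnnorm]
      rw [tsum_congr heq, ← ENNReal.ofReal_tsum_of_nonneg hcnn hcsum]
      exact ENNReal.ofReal_ne_top
    have hae' := ae_lt_top' (AEMeasurable.ennreal_tsum hmeas) hlin
    filter_upwards [hae'] with x hx
    have h1 : Summable fun n => ‖g n x‖₊ := ENNReal.tsum_coe_ne_top_iff_summable.1 hx.ne
    simpa [coe_nnnorm] using NNReal.summable_coe.2 h1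
  have hfeq : (fun x => ∑' n, g n x) =ᵐ[ν] f := by
    filter_upwards [hae] with x hx
    exact (hconv x hx).tsum_eq
  have hhs : HasSum (fun n => ∫ x, g n x ∂ν) (∫ x, ∑' n, g n x ∂ν) :=
    hasSum_integral_of_summable_integral_norm hgint hsumint
  rw [funext hgI] at hhs
  rw [hI.unique hhs]
  exact integral_congr_ae hfeq
end StmtAux4

/-- The Bochner integral is independent of the expansion in simple functions. -/
theorem stmt4 {X E : Type*} [NormedAddCommGroup E] [NormedSpace ℝ E] [CompleteSpace E]
    {R : Set (Set X)} {μ : Set X → ℝ} (hR : IsSetRing R) (hμ : IsPremeasure R μ)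
    (f : X → E) (g h : ℕ → X → E)
    (hfg : SeriesExpansion R μ f g) (hfh : SeriesExpansion R μ f h)
    (J K : ℕ → E)
    (hJ : ∀ n, IsSimpleWithIntegral R μ (g n) (J n))
    (hK : ∀ n, IsSimpleWithIntegral R μ (h n) (K n))
    (I₁ I₂ : E) (hI₁ : HasSum J I₁) (hI₂ : HasSum K I₂) :
    I₁ = I₂ := by
  classical
  by_cases h0 : ∅ ∈ R
  · have hμ0 : μ ∅ = 0 := StmtAux.mu_empty hμ h0
    letI : MeasurableSpace X := MeasurableSpace.generateFrom R
    have hRm : ∀ s ∈ R, MeasurableSet s := fun s hs =>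
      MeasurableSpace.measurableSet_generateFrom hs
    have hle : MeasurableSpace.generateFrom R ≤ (StmtAux2.nuO R μ h0 hμ0).caratheodory :=
      MeasurableSpace.generateFrom_le fun s hs => StmtAux2.nuO_carath hR hμ h0 hμ0 hs
    set ν : MeasureTheory.Measure X := (StmtAux2.nuO R μ h0 hμ0).toMeasure hle with hνdef
    have hν : ∀ s ∈ R, ν s = ENNReal.ofReal (μ s) := fun s hs => by
      rw [hνdef, MeasureTheory.toMeasure_apply _ _ (hRm s hs),
        StmtAux2.nuO_eq hR hμ h0 hμ0 hs]
    rw [StmtAux4.key hμ.1 hRm ν hν f g hfg J hJ I₁ hI₁,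
      StmtAux4.key hμ.1 hRm ν hν f h hfh K hK I₂ hI₂]
  · have hRe : ∀ s, s ∉ R := fun s hs => h0 (by simpa using (hR s hs s hs).2)
    have hz : ∀ (φ : X → E) (v : E), IsSimpleWithIntegral R μ φ v → v = 0 := by
      intro φ v hv
      obtain ⟨m, c, A, hA, -, hveq⟩ := hv
      haveI : IsEmpty (Fin m) := ⟨fun i => hRe _ (hA i)⟩
      simpa using hveq
    have hJ0 : J = fun _ => 0 := funext fun n => hz _ _ (hJ n)
    have hK0 : K = fun _ => 0 := funext fun n => hz _ _ (hK n)
    rw [hJ0] at hI₁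
    rw [hK0] at hI₂
    rw [hI₁.unique hasSum_zero, hI₂.unique hasSum_zero]
end

section
/- If f is Bochner integrable, then for every ε > 0 there exists an expansion f ≃ f₁ + f₂ + ⋯ in simple functions such that ∑ₙ ∫‖fₙ‖ dμ ≤ ∫ ‖f‖ dμ + ε. -/
set_option maxHeartbeats 1000000


open Filter Topology

namespace Stmt7Aux

open Filter Topology MeasureTheory Set ENNReal

variable {X : Type*} {R : Set (Set X)} {μ : Set X → ℝ}

theorem inter_mem (hR : _root_.IsSetRing R) {A B : Set X} (hA : A ∈ R) (hB : B ∈ R) :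
    A ∩ B ∈ R := by
  have h1 : A \ B ∈ R := (hR A hA B hB).2
  have h2 : A \ (A \ B) ∈ R := (hR A hA _ h1).2
  rwa [Set.diff_diff_right_self] at h2

theorem biUnion_mem (hR : _root_.IsSetRing R) (h0 : ∅ ∈ R) {ι : Type*} {s : Finset ι}
    {A : ι → Set X} (hA : ∀ i ∈ s, A i ∈ R) : (⋃ i ∈ s, A i) ∈ R := by
  classical
  induction s using Finset.induction_on with
  | empty => simpa using h0
  | @insert a s' hni ih =>
    rw [Finset.set_biUnion_insert]
    exact (hR _ (hA a (Finset.mem_insert_self a s')) _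
      (ih fun i hi => hA i (Finset.mem_insert_of_mem hi))).1

theorem mu_empty (hμ : IsPremeasure R μ) (h0 : ∅ ∈ R) : μ ∅ = 0 := by
  have h := hμ.2 (fun _ => (∅ : Set X)) (fun _ => h0)
    (fun i j hij => by simp [Function.onFun]) (by simpa using h0)
  rw [Set.iUnion_const] at h
  have h1 : Tendsto (fun _ : ℕ => μ ∅) atTop (𝓝 0) := h.summable.tendsto_atTop_zero
  exact tendsto_nhds_unique tendsto_const_nhds h1

private def pairSeq (A B : Set X) : ℕ → Set X
  | 0 => A
  | 1 => B
  | _ => ∅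

theorem mu_union (hR : _root_.IsSetRing R) (hμ : IsPremeasure R μ) {A B : Set X}
    (hA : A ∈ R) (hB : B ∈ R) (hd : Disjoint A B) : μ (A ∪ B) = μ A + μ B := by
  have h0 : ∅ ∈ R := by simpa using (hR A hA A hA).2
  set C : ℕ → Set X := pairSeq A B with hC
  have hC0 : C 0 = A := rfl
  have hC1 : C 1 = B := rfl
  have hC2 : ∀ n, C (n + 2) = ∅ := fun n => rfl
  have hCR : ∀ n, C n ∈ R := by
    intro n; rcases n with _ | _ | n
    · rwa [hC0]
    · rwa [hC1]
    · rw [hC2]; exact h0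
  have hCd : Pairwise (Function.onFun Disjoint C) := by
    intro i j hij
    unfold Function.onFun
    rcases i with _ | _ | i <;> rcases j with _ | _ | j <;>
      simp_all [hC0, hC1, hC2, hd, hd.symm] <;> omega
  have hCU : (⋃ n, C n) = A ∪ B := by
    ext x; simp only [Set.mem_iUnion, Set.mem_union]
    constructor
    · rintro ⟨n, hn⟩; rcases n with _ | _ | n
      · exact Or.inl (hC0 ▸ hn)
      · exact Or.inr (hC1 ▸ hn)
      · rw [hC2] at hn; exact absurd hn (Set.notMem_empty x)
    · rintro (h | h)
      · exact ⟨0, hC0 ▸ h⟩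
      · exact ⟨1, hC1 ▸ h⟩
  have hsum := hμ.2 C hCR hCd (by rw [hCU]; exact (hR A hA B hB).1)
  rw [hCU] at hsum
  have h2 : HasSum (fun n => μ (C n)) (∑ n ∈ ({0, 1} : Finset ℕ), μ (C n)) := by
    apply hasSum_sum_of_ne_finset_zero
    intro n hn
    rcases n with _ | _ | n
    · simp at hn
    · simp at hn
    · rw [hC2]; exact mu_empty hμ h0
  have h3 := hsum.unique h2
  rw [h3]
  norm_num [hC0, hC1]

theorem mu_nonneg (hμ : IsPremeasure R μ) {A : Set X} (hA : A ∈ R) : 0 ≤ μ A := hμ.1 A hA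

theorem mu_mono (hR : _root_.IsSetRing R) (hμ : IsPremeasure R μ) {A B : Set X}
    (hA : A ∈ R) (hB : B ∈ R) (hAB : A ⊆ B) : μ A ≤ μ B := by
  have h1 : μ (A ∪ (B \ A)) = μ A + μ (B \ A) :=
    mu_union hR hμ hA (hR B hB A hA).2 disjoint_sdiff_self_right
  rw [Set.union_diff_cancel hAB] at h1
  nlinarith [mu_nonneg hμ (hR B hB A hA).2]

/-- countable subadditivity over covers from `R`. -/
theorem mu_subadd (hR : _root_.IsSetRing R) (hμ : IsPremeasure R μ) (h0 : ∅ ∈ R)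
    {A : Set X} (hA : A ∈ R) {B : ℕ → Set X} (hB : ∀ n, B n ∈ R) (hcov : A ⊆ ⋃ n, B n) :
    ENNReal.ofReal (μ A) ≤ ∑' n, ENNReal.ofReal (μ (B n)) := by
  classical
  set C : ℕ → Set X := fun n => (A ∩ B n) \ ⋃ k ∈ Finset.range n, B k with hC
  have hCR : ∀ n, C n ∈ R := fun n =>
    (hR _ (inter_mem hR hA (hB n)) _ (biUnion_mem hR h0 (fun k _ => hB k))).2
  have hCB : ∀ n, C n ⊆ B n := fun n x hx => hx.1.2
  have hCA : ∀ n, C n ⊆ A := fun n x hx => hx.1.1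
  have hCd : Pairwise (Function.onFun Disjoint C) := by
    intro i j hij
    rcases Nat.lt_or_ge i j with h | h
    · refine Set.disjoint_left.2 fun x hxi hxj => hxj.2 ?_
      simp only [Set.mem_iUnion]
      exact ⟨i, Finset.mem_range.2 h, hxi.1.2⟩
    · have h' : j < i := lt_of_le_of_ne h (Ne.symm hij)
      refine Set.disjoint_left.2 fun x hxi _hxj => hxi.2 ?_
      simp only [Set.mem_iUnion]
      exact ⟨j, Finset.mem_range.2 h', _hxj.1.2⟩
  have hCU : (⋃ n, C n) = A := by
    apply Set.Subset.antisymm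
    · exact Set.iUnion_subset hCA
    · intro x hx
      have hex : ∃ n, x ∈ B n := by simpa using hcov hx
      classical
      let n := Nat.find hex
      refine Set.mem_iUnion.2 ⟨n, ⟨⟨hx, Nat.find_spec hex⟩, ?_⟩⟩
      intro hmem
      simp only [Set.mem_iUnion, Finset.mem_range] at hmem
      obtain ⟨k, hk, hxk⟩ := hmem
      exact absurd hxk (Nat.find_min hex hk)
  have hsum := hμ.2 C hCR hCd (hCU ▸ hA)
  rw [hCU] at hsum
  have h1 : ENNReal.ofReal (μ A) = ∑' n, ENNReal.ofReal (μ (C n)) := by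
    rw [← hsum.tsum_eq]
    exact ENNReal.ofReal_tsum_of_nonneg (fun n => mu_nonneg hμ (hCR n)) hsum.summable
  rw [h1]
  exact ENNReal.tsum_le_tsum fun n =>
    ENNReal.ofReal_le_ofReal (mu_mono hR hμ (hCR n) (hB n) (hCB n))

/-- Extension of the premeasure to an honest measure on `generateFrom R`. -/
theorem exists_measure (hR : _root_.IsSetRing R) (hμ : IsPremeasure R μ) (h0 : ∅ ∈ R) :
    ∃ (m : MeasurableSpace X) (M : @MeasureTheory.Measure X m),
      (∀ A ∈ R, MeasurableSet[m] A) ∧ (∀ A ∈ R, M A = ENNReal.ofReal (μ A)) := by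
  classical
  set mf : Set X → ℝ≥0∞ := fun S => if S ∈ R then ENNReal.ofReal (μ S) else ⊤ with hmf
  have hmf0 : mf ∅ = 0 := by
    rw [hmf]; simp only [if_pos h0, mu_empty hμ h0, ENNReal.ofReal_zero]
  set ν := MeasureTheory.OuterMeasure.ofFunction mf hmf0 with hν
  -- value on R
  have hval : ∀ A ∈ R, ν A = ENNReal.ofReal (μ A) := by
    intro A hA
    have hmfA : mf A = ENNReal.ofReal (μ A) := by rw [hmf]; simp only [if_pos hA]
    refine le_antisymm ?_ ?_
    · exact le_trans (MeasureTheory.OuterMeasure.ofFunction_le (m := mf) (m_empty := hmf0) A)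
        (le_of_eq hmfA)
    · rw [hν, MeasureTheory.OuterMeasure.ofFunction_apply]
      refine le_iInf fun t => le_iInf fun ht => ?_
      by_cases hall : ∀ n, t n ∈ R
      · calc ENNReal.ofReal (μ A) ≤ ∑' n, ENNReal.ofReal (μ (t n)) :=
              mu_subadd hR hμ h0 hA hall ht
          _ = ∑' n, mf (t n) := by
              refine tsum_congr fun n => ?_
              rw [hmf]; simp only [if_pos (hall n)]
      · push_neg at hall
        obtain ⟨n, hn⟩ := hall
        have : mf (t n) = ⊤ := by rw [hmf]; simp only [if_neg hn]
        calc ENNReal.ofReal (μ A) ≤ ⊤ := le_top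
          _ = mf (t n) := this.symm
          _ ≤ ∑' n, mf (t n) := ENNReal.le_tsum n
  -- caratheodory measurability
  have hcar : ∀ A ∈ R, MeasurableSet[ν.caratheodory] A := by
    intro A hA
    apply MeasureTheory.OuterMeasure.ofFunction_caratheodory
    intro t
    by_cases ht : t ∈ R
    · have h1 : t ∩ A ∈ R := inter_mem hR ht hA
      have h2 : t \ A ∈ R := (hR t ht A hA).2
      have h3 : μ t = μ (t ∩ A) + μ (t \ A) := by
        have := mu_union hR hμ h1 h2 (Set.disjoint_of_subset_left Set.inter_subset_right
          disjoint_sdiff_self_right)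
        rwa [Set.inter_union_diff] at this
      rw [hmf]
      simp only [if_pos ht, if_pos h1, if_pos h2, h3]
      rw [ENNReal.ofReal_add (mu_nonneg hμ h1) (mu_nonneg hμ h2)]
    · rw [hmf]; simp only [if_neg ht]; exact le_top
  letI mX : MeasurableSpace X := MeasurableSpace.generateFrom R
  have hle : mX ≤ ν.caratheodory := MeasurableSpace.generateFrom_le fun A hA => hcar A hA
  refine ⟨mX, ν.toMeasure hle, fun A hA => MeasurableSpace.measurableSet_generateFrom hA,
    fun A hA => ?_⟩
  rw [MeasureTheory.toMeasure_apply ν hle (MeasurableSpace.measurableSet_generateFrom hA)]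
  exact hval A hA


section Integration
variable {X : Type*} {R : Set (Set X)} {μ : Set X → ℝ}
variable {E : Type*} [NormedAddCommGroup E] [NormedSpace ℝ E] [CompleteSpace E]
variable [mX : MeasurableSpace X] {M : MeasureTheory.Measure X}

theorem simple_integral (hmeas : ∀ A ∈ R, MeasurableSet A)
    (hM : ∀ A ∈ R, M A = ENNReal.ofReal (μ A)) (h0 : ∀ A ∈ R, 0 ≤ μ A)
    {f : X → E} {v : E} (hf : IsSimpleWithIntegral R μ f v) :
    MeasureTheory.Integrable f M ∧ ∫ x, f x ∂M = v := by
  obtain ⟨n, c, A, hA, hfx, hv⟩ := hf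
  have hfeq : f = fun x => ∑ i, Set.indicator (A i) (fun _ => c i) x := funext hfx
  have hintgr : ∀ i : Fin n, MeasureTheory.Integrable
      (fun x => Set.indicator (A i) (fun _ => c i) x) M := by
    intro i
    rw [MeasureTheory.integrable_indicator_iff (hmeas _ (hA i))]
    refine (MeasureTheory.integrableOn_const_iff (by simp)).2 (Or.inr ?_)
    rw [hM _ (hA i)]
    exact ENNReal.ofReal_lt_top
  constructor
  · rw [hfeq]
    exact MeasureTheory.integrable_finset_sum _ fun i _ => hintgr i
  · rw [hfeq, MeasureTheory.integral_finset_sum _ fun i _ => hintgr i, hv]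
    refine Finset.sum_congr rfl fun i _ => ?_
    rw [MeasureTheory.integral_indicator_const (c i) (hmeas _ (hA i)), MeasureTheory.measureReal_def, hM _ (hA i),
      ENNReal.toReal_ofReal (h0 _ (hA i))]

/-- The key monotonicity lemma: if `u ≤ ∑ ψₙ` wherever the series converges
absolutely, then `∫u ≤ ∑∫ψₙ`. -/
theorem mono_lemma (hmeas : ∀ A ∈ R, MeasurableSet A)
    (hM : ∀ A ∈ R, M A = ENNReal.ofReal (μ A)) (h0 : ∀ A ∈ R, 0 ≤ μ A)
    {u : X → ℝ} {vu : ℝ} (hu : IsSimpleWithIntegral R μ u vu)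
    {ψ : ℕ → X → ℝ} {I : ℕ → ℝ} (hψ : ∀ n, IsSimpleWithIntegral R μ (ψ n) (I n))
    {a : ℕ → ℝ} (ha : ∀ n, IsSimpleWithIntegral R μ (fun x => |ψ n x|) (a n)) (hasum : Summable a)
    (hpt : ∀ x, Summable (fun n => |ψ n x|) → u x ≤ ∑' n, ψ n x) :
    Summable I ∧ vu ≤ ∑' n, I n := by
  have hui := simple_integral hmeas hM h0 hu
  have hψi := fun n => simple_integral hmeas hM h0 (hψ n)
  have hai := fun n => simple_integral hmeas hM h0 (ha n)
  have hanneg : ∀ n, 0 ≤ a n := fun n => by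
    rw [← (hai n).2]; exact MeasureTheory.integral_nonneg fun x => abs_nonneg _
  -- Summability of the integrals
  have hInorm : ∀ n, ‖I n‖ ≤ a n := by
    intro n
    rw [← (hψi n).2, ← (hai n).2]
    calc ‖∫ x, ψ n x ∂M‖ ≤ ∫ x, ‖ψ n x‖ ∂M := MeasureTheory.norm_integral_le_integral_norm _
      _ = ∫ x, |ψ n x| ∂M := by simp [Real.norm_eq_abs]
  have hIsum : Summable I := Summable.of_norm_bounded hasum hInorm
  refine ⟨hIsum, ?_⟩
  -- a.e. absolute summability
  have haemeas : ∀ n : ℕ, AEMeasurable (fun x => ENNReal.ofReal |ψ n x|) M := by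
    intro n
    exact ENNReal.measurable_ofReal.comp_aemeasurable
      ((hai n).1.aestronglyMeasurable.aemeasurable)
  have hlin : ∀ n, ∫⁻ x, ENNReal.ofReal |ψ n x| ∂M = ENNReal.ofReal (a n) := by
    intro n
    rw [← (hai n).2,
      ← MeasureTheory.ofReal_integral_eq_lintegral_ofReal (hai n).1
        (Filter.Eventually.of_forall fun x => abs_nonneg _)]
  have hlintsum : ∫⁻ x, ∑' n, ENNReal.ofReal |ψ n x| ∂M = ENNReal.ofReal (∑' n, a n) := by
    rw [MeasureTheory.lintegral_tsum haemeas, ENNReal.ofReal_tsum_of_nonneg hanneg hasum]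
    exact tsum_congr fun n => hlin n
  have hae : ∀ᵐ x ∂M, Summable fun n => |ψ n x| := by
    have h1 : ∀ᵐ x ∂M, (∑' n, ENNReal.ofReal |ψ n x|) < ⊤ := by
      refine MeasureTheory.ae_lt_top' (AEMeasurable.ennreal_tsum haemeas) ?_
      rw [hlintsum]; exact ENNReal.ofReal_ne_top
    filter_upwards [h1] with x hx
    have := ENNReal.summable_toReal hx.ne
    simpa [ENNReal.toReal_ofReal (abs_nonneg _)] using this
  -- for each k : vu ≤ ∑_{n<k} I n + tail k
  have hkey : ∀ k : ℕ, vu ≤ (∑ n ∈ Finset.range k, I n) + ∑' n, a (n + k) := by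
    intro k
    have hSk : MeasureTheory.Integrable (fun x => ∑ n ∈ Finset.range k, ψ n x) M :=
      MeasureTheory.integrable_finset_sum _ fun n _ => (hψi n).1
    have hSkint : ∫ x, (∑ n ∈ Finset.range k, ψ n x) ∂M = ∑ n ∈ Finset.range k, I n := by
      rw [MeasureTheory.integral_finset_sum _ fun n _ => (hψi n).1]
      exact Finset.sum_congr rfl fun n _ => (hψi n).2
    have hdiff : MeasureTheory.Integrable (fun x => u x - ∑ n ∈ Finset.range k, ψ n x) M :=
      (hui).1.sub hSk
    have hpos : MeasureTheory.Integrable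
        (fun x => max (u x - ∑ n ∈ Finset.range k, ψ n x) 0) M := hdiff.pos_part
    have htail_nonneg : (0:ℝ) ≤ ∑' n, a (n + k) :=
      tsum_nonneg fun n => hanneg _
    have htail_summable : Summable fun n => a (n + k) := by
      exact (summable_nat_add_iff k).2 hasum
    -- step 1 : vu - ∑_{n<k} I n = ∫ (u - Sk) ≤ ∫ (u - Sk)⁺
    have step1 : vu - ∑ n ∈ Finset.range k, I n ≤
        ∫ x, max (u x - ∑ n ∈ Finset.range k, ψ n x) 0 ∂M := by
      rw [← hui.2, ← hSkint, ← MeasureTheory.integral_sub hui.1 hSk]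
      exact MeasureTheory.integral_mono hdiff hpos fun x => le_max_left _ _
    -- step 2 : ∫ (u - Sk)⁺ ≤ tail k   via lintegral
    have step2 : ∫ x, max (u x - ∑ n ∈ Finset.range k, ψ n x) 0 ∂M ≤ ∑' n, a (n + k) := by
      rw [← ENNReal.ofReal_le_ofReal_iff htail_nonneg,
        MeasureTheory.ofReal_integral_eq_lintegral_ofReal hpos
          (Filter.Eventually.of_forall fun x => le_max_right _ _)]
      have hbound : ∀ᵐ x ∂M, ENNReal.ofReal (max (u x - ∑ n ∈ Finset.range k, ψ n x) 0) ≤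
          ∑' n, ENNReal.ofReal |ψ (n + k) x| := by
        filter_upwards [hae] with x hx
        have hxs : Summable fun n => ψ n x := hx.of_abs
        have hxtail : Summable fun n => |ψ (n + k) x| :=
          (summable_nat_add_iff k).2 hx
        have h2 : u x ≤ ∑' n, ψ n x := hpt x hx
        have h3 : ∑' n, ψ n x = (∑ n ∈ Finset.range k, ψ n x) + ∑' n, ψ (n + k) x :=
          (Summable.sum_add_tsum_nat_add k hxs).symm
        have h4 : ∑' n, ψ (n + k) x ≤ ∑' n, |ψ (n + k) x| :=
          Summable.tsum_le_tsum (fun n => le_abs_self _) ((summable_nat_add_iff k).2 hxs) hxtail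
        have h5 : max (u x - ∑ n ∈ Finset.range k, ψ n x) 0 ≤ ∑' n, |ψ (n + k) x| := by
          apply max_le ?_ (tsum_nonneg fun n => abs_nonneg _)
          linarith
        calc ENNReal.ofReal (max (u x - ∑ n ∈ Finset.range k, ψ n x) 0)
            ≤ ENNReal.ofReal (∑' n, |ψ (n + k) x|) := ENNReal.ofReal_le_ofReal h5
          _ = ∑' n, ENNReal.ofReal |ψ (n + k) x| :=
              ENNReal.ofReal_tsum_of_nonneg (fun n => abs_nonneg _) hxtail
      calc ∫⁻ x, ENNReal.ofReal (max (u x - ∑ n ∈ Finset.range k, ψ n x) 0) ∂M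
          ≤ ∫⁻ x, ∑' n, ENNReal.ofReal |ψ (n + k) x| ∂M :=
            MeasureTheory.lintegral_mono_ae hbound
        _ = ∑' n, ∫⁻ x, ENNReal.ofReal |ψ (n + k) x| ∂M :=
            MeasureTheory.lintegral_tsum fun n => haemeas (n + k)
        _ = ∑' n, ENNReal.ofReal (a (n + k)) := tsum_congr fun n => hlin (n + k)
        _ = ENNReal.ofReal (∑' n, a (n + k)) :=
            (ENNReal.ofReal_tsum_of_nonneg (fun n => hanneg _) htail_summable).symm
    linarith
  -- pass to the limit
  have hlim : Tendsto (fun k => (∑ n ∈ Finset.range k, I n) + ∑' n, a (n + k))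
      atTop (𝓝 (∑' n, I n + 0)) := by
    refine Tendsto.add hIsum.hasSum.tendsto_sum_nat ?_
    have := tendsto_sum_nat_add a
    simpa [add_comm] using this
  rw [add_zero] at hlim
  exact ge_of_tendsto hlim (Filter.Eventually.of_forall hkey)

end Integration

section SimpleAlgebra
variable {X : Type*} {R : Set (Set X)} {μ : Set X → ℝ}
variable {E : Type*} [NormedAddCommGroup E] [NormedSpace ℝ E]

theorem iswi_zero : IsSimpleWithIntegral R μ (fun _ : X => (0 : E)) 0 := by
  refine ⟨0, fun i => i.elim0, fun i => i.elim0, fun i => i.elim0, fun x => by simp, by simp⟩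

theorem iswi_add {f g : X → E} {v w : E} (hf : IsSimpleWithIntegral R μ f v) (hg : IsSimpleWithIntegral R μ g w) :
    IsSimpleWithIntegral R μ (fun x => f x + g x) (v + w) := by
  obtain ⟨n, c, A, hA, hfx, hv⟩ := hf
  obtain ⟨m, c', A', hA', hgx, hw⟩ := hg
  refine ⟨n + m, Fin.append c c', Fin.append A A', ?_, ?_, ?_⟩
  · intro i
    refine Fin.addCases (fun i => ?_) (fun j => ?_) i
    · rw [Fin.append_left]; exact hA i
    · rw [Fin.append_right]; exact hA' j
  · intro x
    change f x + g x = _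
    rw [hfx x, hgx x, Fin.sum_univ_add]
    simp [Fin.append_left, Fin.append_right]
  · rw [hv, hw, Fin.sum_univ_add]
    simp [Fin.append_left, Fin.append_right]

theorem isf_sum_range {h : ℕ → X → E} (hh : ∀ n, ∃ v, IsSimpleWithIntegral R μ (h n) v) (N : ℕ) :
    ∃ v, IsSimpleWithIntegral R μ (fun x => ∑ i ∈ Finset.range N, h i x) v := by
  induction N with
  | zero =>
    refine ⟨0, ?_⟩
    have heq : (fun x : X => ∑ i ∈ Finset.range 0, h i x) = fun _ => (0 : E) := by
      funext x; simp
    rw [heq]; exact iswi_zero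
  | succ N ih =>
    obtain ⟨v, hv⟩ := ih
    obtain ⟨w, hw⟩ := hh N
    refine ⟨v + w, ?_⟩
    have heq : (fun x : X => ∑ i ∈ Finset.range (N + 1), h i x) =
        fun x => (∑ i ∈ Finset.range N, h i x) + h N x := by
      funext x; rw [Finset.sum_range_succ]
    rw [heq]
    exact iswi_add hv hw

theorem iswi_norm (hR : _root_.IsSetRing R) (h0 : ∅ ∈ R) {f : X → E} {v : E}
    (hf : IsSimpleWithIntegral R μ f v) : ∃ w, IsSimpleWithIntegral R μ (fun x => ‖f x‖) w := by
  classical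
  obtain ⟨n, c, A, hA, hfx, -⟩ := hf
  set atomE : Finset (Fin n) → Set X := fun S => {x | ∀ i, i ∈ S ↔ x ∈ A i} with hatom
  -- membership in the ring
  have hmemR : ∀ S : Finset (Fin n), S.Nonempty → atomE S ∈ R := by
    intro S hS
    obtain ⟨i₀, hi₀⟩ := hS
    have hkey : atomE S = (A i₀ \ ⋃ i ∈ S, (A i₀ \ A i)) \ ⋃ i ∈ Sᶜ, A i := by
      ext x
      constructor
      · intro hx
        simp only [hatom, Set.mem_setOf_eq] at hx
        refine ⟨⟨(hx i₀).1 hi₀, fun hmem => ?_⟩, fun hmem => ?_⟩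
        · obtain ⟨i, hi, hd⟩ := Set.mem_iUnion₂.1 hmem
          exact hd.2 ((hx i).1 hi)
        · obtain ⟨i, hi, hxi⟩ := Set.mem_iUnion₂.1 hmem
          exact (Finset.mem_compl.1 hi) ((hx i).2 hxi)
      · rintro ⟨⟨hx0, hU1⟩, hU2⟩
        simp only [hatom, Set.mem_setOf_eq]
        intro i
        constructor
        · intro hi
          by_contra hxi
          exact hU1 (Set.mem_iUnion₂.2 ⟨i, hi, ⟨hx0, hxi⟩⟩)
        · intro hxi
          by_contra hi
          exact hU2 (Set.mem_iUnion₂.2 ⟨i, Finset.mem_compl.2 hi, hxi⟩)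
    rw [hkey]
    refine (hR _ ?_ _ (biUnion_mem hR h0 fun i _ => hA i)).2
    exact (hR _ (hA i₀) _ (biUnion_mem hR h0 fun i _ => (hR _ (hA i₀) _ (hA i)).2)).2
  -- pointwise description
  have hmem : ∀ (x : X) (S : Finset (Fin n)),
      x ∈ atomE S ↔ S = Finset.univ.filter (fun i => x ∈ A i) := by
    intro x S
    simp only [hatom, Set.mem_setOf_eq, Finset.ext_iff, Finset.mem_filter, Finset.mem_univ,
      true_and]
  have hfval : ∀ x, f x = ∑ i ∈ Finset.univ.filter (fun i => x ∈ A i), c i := by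
    intro x
    rw [hfx x]
    simp [Finset.sum_filter, Set.indicator_apply]
  -- the representation of ‖f‖ over nonempty subsets
  have hmain : ∀ x, ‖f x‖ = ∑ S : {S : Finset (Fin n) // S.Nonempty},
      (atomE S.1).indicator (fun _ => ‖∑ i ∈ S.1, c i‖) x := by
    intro x
    set Sx := Finset.univ.filter (fun i => x ∈ A i) with hSx
    have hterm : ∀ S : {S : Finset (Fin n) // S.Nonempty},
        (atomE S.1).indicator (fun _ => ‖∑ i ∈ S.1, c i‖) x =
          if S.1 = Sx then ‖∑ i ∈ S.1, c i‖ else 0 := by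
      intro S
      rw [Set.indicator_apply]
      congr 1
      simp only [eq_iff_iff]
      exact hmem x S.1
    rw [Finset.sum_congr rfl fun S _ => hterm S]
    by_cases hx : Sx.Nonempty
    · rw [Finset.sum_eq_single_of_mem (⟨Sx, hx⟩ : {S : Finset (Fin n) // S.Nonempty})
        (Finset.mem_univ _)]
      · rw [if_pos rfl, hfval x]
      · intro b _ hb
        exact if_neg fun h => hb (Subtype.ext h)
    · rw [Finset.not_nonempty_iff_eq_empty] at hx
      have hzero : ∀ S : {S : Finset (Fin n) // S.Nonempty}, S ∈ Finset.univ →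
          (if S.1 = Sx then ‖∑ i ∈ S.1, c i‖ else 0) = 0 := by
        intro S _
        rw [if_neg]
        intro h
        rw [hx] at h
        exact Finset.nonempty_iff_ne_empty.1 S.2 h
      rw [Finset.sum_congr rfl hzero, Finset.sum_const, smul_zero, hfval x, ← hSx, hx,
        Finset.sum_empty, norm_zero]
  -- transport to a `Fin`-indexed family
  set σ := {S : Finset (Fin n) // S.Nonempty}
  set e : Fin (Fintype.card σ) ≃ σ := (Fintype.equivFin σ).symm with he
  refine ⟨∑ j, μ (atomE (e j).1) • ‖∑ i ∈ (e j).1, c i‖,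
    Fintype.card σ, fun j => ‖∑ i ∈ (e j).1, c i‖, fun j => atomE (e j).1,
    fun j => hmemR (e j).1 (e j).2, fun x => ?_, rfl⟩
  change ‖f x‖ = _
  rw [hmain x]
  exact (Equiv.sum_comp e fun S => (atomE S.1).indicator (fun _ => ‖∑ i ∈ S.1, c i‖) x).symm

end SimpleAlgebra

theorem iswi_empty {X : Type*} {E : Type*} [AddCommGroup E] [Module ℝ E]
    {μ : Set X → ℝ} {f : X → E} {v : E}
    (hf : IsSimpleWithIntegral (∅ : Set (Set X)) μ f v) : (∀ x, f x = 0) ∧ v = 0 := by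
  obtain ⟨n, c, A, hA, hfx, hv⟩ := hf
  rcases n with _ | n
  · refine ⟨fun x => by simpa using hfx x, by simpa using hv⟩
  · exact absurd (hA ⟨0, Nat.succ_pos n⟩) (Set.notMem_empty _)


end Stmt7Aux

open Stmt7Aux in
/-- For every `ε > 0` there is an expansion `f ≃ ∑ gₙ` with `∑ ∫‖gₙ‖ ≤ ∫‖f‖ + ε`. -/
theorem stmt7 {X E : Type*} [NormedAddCommGroup E] [NormedSpace ℝ E] [CompleteSpace E]
    {R : Set (Set X)} {μ : Set X → ℝ} (hR : IsSetRing R) (hμ : IsPremeasure R μ)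
    (f : X → E) (hf : BochnerIntegrable R μ f)
    (c : ℝ) (hc : HasBochnerIntegral R μ (fun x => ‖f x‖) c)
    (ε : ℝ) (hε : 0 < ε) :
    ∃ (g : ℕ → X → E) (d : ℕ → ℝ), SeriesExpansion R μ f g ∧
      (∀ n, IsSimpleWithIntegral R μ (fun x => ‖g n x‖) (d n)) ∧
      Summable d ∧ ∑' n, d n ≤ c + ε := by
  classical
  obtain ⟨h, hsimph, ⟨b, hbint, hbsum⟩, hptf⟩ := hf
  obtain ⟨φ, ⟨hsimpφ, ⟨a', ha', ha'sum⟩, hptφ⟩, J, hJ, hJc⟩ := hc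
  rcases Set.eq_empty_or_nonempty R with hRe | ⟨A₀, hA₀⟩
  · -- trivial case : R = ∅, everything is zero
    subst hRe
    have hh0 : ∀ n x, h n x = 0 := fun n x =>
      (iswi_empty (hsimph n).choose_spec).1 x
    have hf0 : ∀ x, f x = 0 := by
      intro x
      have hs : Summable (fun n => ‖h n x‖) := by
        have : (fun n => ‖h n x‖) = fun _ => (0:ℝ) := funext fun n => by simp [hh0]
        rw [this]; exact summable_zero
      have h2 := hptf x hs
      have h3 : HasSum (fun _ : ℕ => (0:E)) (f x) := by
        have : (fun n => h n x) = fun _ : ℕ => (0:E) := funext fun n => hh0 n x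
        rwa [this] at h2
      simpa using h3.unique hasSum_zero
    have hc0 : c = 0 := by
      have hJ0 : ∀ n, J n = 0 := fun n => (iswi_empty (hJ n)).2
      have : HasSum (fun _ : ℕ => (0:ℝ)) c := by
        have he : J = fun _ : ℕ => (0:ℝ) := funext hJ0
        rwa [he] at hJc
      simpa using this.unique hasSum_zero
    have hnz : IsSimpleWithIntegral (∅ : Set (Set X)) μ (fun x : X => ‖(fun _ : X => (0:E)) x‖) (0:ℝ) := by
      have : (fun x : X => ‖(fun _ : X => (0:E)) x‖) = fun _ : X => (0:ℝ) := by
        funext x; simp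
      rw [this]; exact iswi_zero
    refine ⟨fun _ => fun _ => 0, fun _ => 0,
      ⟨fun n => ⟨0, iswi_zero⟩, ⟨fun _ => 0, fun n => hnz, summable_zero⟩, ?_⟩,
      fun n => hnz, summable_zero, ?_⟩
    · intro x _
      rw [hf0 x]
      exact hasSum_zero
    · rw [tsum_zero, hc0]; linarith
  · -- main case
    have h0 : ∅ ∈ R := by
      have := (hR A₀ hA₀ A₀ hA₀).2
      rwa [Set.diff_self] at this
    obtain ⟨mX, M, hmeas, hM⟩ := exists_measure hR hμ h0
    letI := mX
    have hbnn : ∀ n, 0 ≤ b n := by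
      intro n
      rw [← (simple_integral hmeas hM hμ.1 (hbint n)).2]
      exact MeasureTheory.integral_nonneg fun x => norm_nonneg _
    -- choice of N
    obtain ⟨N, hN⟩ : ∃ N, (∑' k, b (k + N)) < ε/2 :=
      ((tendsto_sum_nat_add b).eventually (gt_mem_nhds (by linarith : (0:ℝ) < ε/2))).exists
    have hbtail : Summable fun k => b (N + k) := by
      have := (summable_nat_add_iff (f := b) N).2 hbsum
      refine this.congr fun k => ?_
      rw [add_comm]
    have hTB : (∑' k, b (N + k)) < ε/2 := by
      have he : (∑' k, b (N + k)) = ∑' k, b (k + N) := tsum_congr fun k => by rw [add_comm]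
      rw [he]; exact hN
    -- the head simple function
    obtain ⟨vN, hvN⟩ := isf_sum_range (fun n => hsimph n) N
    obtain ⟨w0, hw0⟩ := iswi_norm hR h0 hvN
    set sN : X → E := fun x => ∑ i ∈ Finset.range N, h i x with hsN
    -- interleaved control series
    set ψ : ℕ → X → ℝ := fun n => if Even n then φ (n / 2) else fun x => ‖h (N + n / 2) x‖
      with hψdef
    set I : ℕ → ℝ := fun n => if Even n then J (n / 2) else b (N + n / 2) with hIdef
    set aa : ℕ → ℝ := fun n => if Even n then a' (n / 2) else b (N + n / 2) with haadef
    have heven : ∀ k : ℕ, Even (2 * k) := fun k => ⟨k, two_mul k⟩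
    have hodd : ∀ k : ℕ, ¬ Even (2 * k + 1) := fun k => by
      simp [Nat.even_add_one, Nat.even_iff, Nat.mul_mod_right]
    have hdiv1 : ∀ k : ℕ, 2 * k / 2 = k := fun k => by omega
    have hdiv2 : ∀ k : ℕ, (2 * k + 1) / 2 = k := fun k => by omega
    have hψeven : ∀ k, ψ (2 * k) = φ k := fun k => by
      rw [hψdef]; simp only [if_pos (heven k), hdiv1]
    have hψodd : ∀ k, ψ (2 * k + 1) = fun x => ‖h (N + k) x‖ := fun k => by
      rw [hψdef]; simp only [if_neg (hodd k), hdiv2]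
    have hIeven : ∀ k, I (2 * k) = J k := fun k => by
      rw [hIdef]; simp only [if_pos (heven k), hdiv1]
    have hIodd : ∀ k, I (2 * k + 1) = b (N + k) := fun k => by
      rw [hIdef]; simp only [if_neg (hodd k), hdiv2]
    have haaeven : ∀ k, aa (2 * k) = a' k := fun k => by
      rw [haadef]; simp only [if_pos (heven k), hdiv1]
    have haaodd : ∀ k, aa (2 * k + 1) = b (N + k) := fun k => by
      rw [haadef]; simp only [if_neg (hodd k), hdiv2]
    have hψI : ∀ n, IsSimpleWithIntegral R μ (ψ n) (I n) := by
      intro n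
      rcases Nat.even_or_odd n with ⟨k, hk⟩ | ⟨k, hk⟩
      · have hn : n = 2 * k := by omega
        subst hn
        rw [hψeven k, hIeven k]; exact hJ k
      · subst hk
        rw [hψodd k, hIodd k]; exact hbint (N + k)
    have haaint : ∀ n, IsSimpleWithIntegral R μ (fun x => |ψ n x|) (aa n) := by
      intro n
      rcases Nat.even_or_odd n with ⟨k, hk⟩ | ⟨k, hk⟩
      · have hn : n = 2 * k := by omega
        subst hn
        simp only [hψeven k, haaeven k]
        have := ha' k
        simpa only [Real.norm_eq_abs] using this
      · subst hk
        simp only [hψodd k, haaodd k, abs_norm]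
        exact hbint (N + k)
    have haasum : Summable aa := by
      have he : HasSum (fun k => aa (2 * k)) (∑' k, a' k) := by
        have : (fun k => aa (2 * k)) = a' := funext haaeven
        rw [this]; exact ha'sum.hasSum
      have ho : HasSum (fun k => aa (2 * k + 1)) (∑' k, b (N + k)) := by
        have : (fun k => aa (2 * k + 1)) = fun k => b (N + k) := funext haaodd
        rw [this]; exact hbtail.hasSum
      exact (he.even_add_odd ho).summable
    -- the pointwise inequality
    have hpt : ∀ x, Summable (fun n => |ψ n x|) → ‖sN x‖ ≤ ∑' n, ψ n x := by
      intro x hsx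
      have hinj2 : Function.Injective (fun k : ℕ => 2 * k) := fun p q hpq => by
        have hpq' : 2 * p = 2 * q := hpq
        omega
      have hinj2' : Function.Injective (fun k : ℕ => 2 * k + 1) := fun p q hpq => by
        have hpq' : 2 * p + 1 = 2 * q + 1 := hpq
        omega
      have hφs : Summable fun k => |φ k x| := by
        have h1 := hsx.comp_injective hinj2
        refine h1.congr fun k => ?_
        show |ψ (2 * k) x| = _
        rw [hψeven k]
      have hhs : Summable fun k => ‖h (N + k) x‖ := by
        have h1 := hsx.comp_injective hinj2'
        refine h1.congr fun k => ?_
        show |ψ (2 * k + 1) x| = _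
        rw [hψodd k, abs_norm]
      have hhall : Summable fun n => ‖h n x‖ := by
        refine (summable_nat_add_iff N).1 ?_
        refine hhs.congr fun k => ?_
        rw [add_comm]
      have hfs : HasSum (fun n => h n x) (f x) := hptf x hhall
      have hφx : HasSum (fun k => φ k x) ‖f x‖ := by
        refine hptφ x ?_
        refine hφs.congr fun k => ?_
        rw [Real.norm_eq_abs]
      have htail : HasSum (fun n => h (n + N) x) (f x - sN x) := by
        refine (hasSum_nat_add_iff (f := fun n => h n x) N).2 ?_
        have h4 : (f x - sN x) + ∑ i ∈ Finset.range N, h i x = f x := by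
          rw [hsN]; abel
        rw [h4]; exact hfs
      have hnorm1 : ‖f x - sN x‖ ≤ ∑' n, ‖h (N + n) x‖ := by
        calc ‖f x - sN x‖ = ‖∑' n, h (n + N) x‖ := by rw [htail.tsum_eq]
          _ ≤ ∑' n, ‖h (n + N) x‖ := norm_tsum_le_tsum_norm (by
              refine hhs.congr fun k => ?_; rw [add_comm])
          _ = ∑' n, ‖h (N + n) x‖ := tsum_congr fun n => by rw [add_comm]
      have hψsum : HasSum (fun n => ψ n x) (‖f x‖ + ∑' k, ‖h (N + k) x‖) := by
        apply HasSum.even_add_odd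
        · have : (fun k => ψ (2 * k) x) = fun k => φ k x := funext fun k => by rw [hψeven k]
          rw [this]; exact hφx
        · have : (fun k => ψ (2 * k + 1) x) = fun k => ‖h (N + k) x‖ :=
            funext fun k => by rw [hψodd k]
          rw [this]; exact hhs.hasSum
      have hn2 : ‖sN x‖ ≤ ‖f x‖ + ‖f x - sN x‖ := by
        have h5 : f x - (f x - sN x) = sN x := by abel
        calc ‖sN x‖ = ‖f x - (f x - sN x)‖ := by rw [h5]
          _ ≤ ‖f x‖ + ‖f x - sN x‖ := norm_sub_le _ _
      rw [hψsum.tsum_eq]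
      linarith
    obtain ⟨hIsum, hvub⟩ := mono_lemma hmeas hM hμ.1 hw0 hψI haaint haasum hpt
    have hItsum : HasSum I (c + ∑' k, b (N + k)) := by
      apply HasSum.even_add_odd
      · have : (fun k => I (2 * k)) = J := funext hIeven
        rw [this]; exact hJc
      · have : (fun k => I (2 * k + 1)) = fun k => b (N + k) := funext hIodd
        rw [this]; exact hbtail.hasSum
    have hw0b : w0 ≤ c + ε/2 := by
      rw [hItsum.tsum_eq] at hvub
      linarith
    -- assemble the answer
    set g : ℕ → X → E := fun n => Nat.casesOn n sN (fun k => h (N + k)) with hg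
    set d : ℕ → ℝ := fun n => Nat.casesOn n w0 (fun k => b (N + k)) with hd
    have hdint : ∀ n, IsSimpleWithIntegral R μ (fun x => ‖g n x‖) (d n) := by
      intro n
      cases n with
      | zero => exact hw0
      | succ k => exact hbint (N + k)
    have hdtail : Summable fun n => d (n + 1) := hbtail
    have hdsum : Summable d := (summable_nat_add_iff 1).1 hdtail
    refine ⟨g, d, ⟨?_, ⟨d, hdint, hdsum⟩, ?_⟩, hdint, hdsum, ?_⟩
    · intro n
      cases n with
      | zero => exact ⟨vN, hvN⟩
      | succ k => exact hsimph (N + k)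
    · intro x hx
      have hxt : Summable fun k => ‖h (N + k) x‖ := (summable_nat_add_iff 1).2 hx
      have hhall : Summable fun n => ‖h n x‖ := by
        refine (summable_nat_add_iff N).1 ?_
        refine hxt.congr fun k => ?_
        rw [add_comm]
      have hfs : HasSum (fun n => h n x) (f x) := hptf x hhall
      have htail : HasSum (fun n => h (n + N) x) (f x - sN x) := by
        refine (hasSum_nat_add_iff (f := fun n => h n x) N).2 ?_
        have h4 : (f x - sN x) + ∑ i ∈ Finset.range N, h i x = f x := by
          rw [hsN]; abel
        rw [h4]; exact hfs
      have hfun : (fun n => g (n + 1) x) = fun n => h (n + N) x :=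
        funext fun n => by show h (N + n) x = h (n + N) x; rw [Nat.add_comm]
      have htail' : HasSum (fun n => g (n + 1) x) (f x - sN x) := by rw [hfun]; exact htail
      have hres := (hasSum_nat_add_iff (f := fun n => g n x) 1).1 htail'
      have hfin : (f x - sN x) + ∑ i ∈ Finset.range 1, g i x = f x := by
        rw [Finset.sum_range_one]
        show f x - sN x + sN x = f x
        abel
      rwa [hfin] at hres
    · have ht0 : ∑' n, d n = d 0 + ∑' n, d (n + 1) := Summable.tsum_eq_zero_add hdsum
      have ht1 : ∑' n, d (n + 1) = ∑' k, b (N + k) := rfl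
      rw [ht0, ht1]
      show w0 + _ ≤ _
      linarith
end
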